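/- arXiv:2603.02334 — 6 statements merged into one kernel-verified Lean document; each statement's English description precedes it below -/
import Mathlib

section
/- For every n ≥ 2, if Ψ_1, …, Ψ_t are t mutually orthogonal quantum Latin squares of order n, then t ≤ n − 1. -/
noncomputable section

/-- A quantum Latin square of order `n`: an `n × n` matrix of vectors in `ℂ^n`
such that every row and every column is an orthonormal family. -/
def IsQLS {n : ℕ} (Ψ : Fin n → Fin n → EuclideanSpace ℂ (Fin n)) : Prop :=
  (∀ i, Orthonormal ℂ (fun j => Ψ i j)) ∧ (∀ j, Orthonormal ℂ (fun i => Ψ i j))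

/-- Two quantum Latin squares are orthogonal: for distinct cells `(i,j) ≠ (k,l)`,
`⟨Ψ_{ij}, Ψ_{kl}⟩ · ⟨Φ_{ij}, Φ_{kl}⟩ = 0`; equivalently, the `n²` vectors
`Ψ_{ij} ⊗ Φ_{ij}` form an orthonormal basis of `ℂ^n ⊗ ℂ^n`. -/
def OrthQLS {n : ℕ} (Ψ Φ : Fin n → Fin n → EuclideanSpace ℂ (Fin n)) : Prop :=
  ∀ i j k l, (i, j) ≠ (k, l) →
    (inner ℂ (Ψ i j) (Ψ k l) : ℂ) * (inner ℂ (Φ i j) (Φ k l) : ℂ) = 0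

/-- An orthonormal family of `n` vectors in `ℂ^n` spans everything, so a vector
orthogonal to all of them is zero. -/
lemma eq_zero_of_inner_all_zero {n : ℕ} (v : Fin n → EuclideanSpace ℂ (Fin n))
    (hv : Orthonormal ℂ v) (w : EuclideanSpace ℂ (Fin n))
    (h : ∀ j, (inner ℂ (v j) w : ℂ) = 0) : w = 0 := by
  have hspan : Submodule.span ℂ (Set.range v) = ⊤ := by
    apply Submodule.eq_top_of_finrank_eq
    rw [finrank_span_eq_card hv.linearIndependent]
    simp [finrank_euclideanSpace]
  have hall : ∀ u ∈ Submodule.span ℂ (Set.range v), (inner ℂ u w : ℂ) = 0 := by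
    intro u hu
    induction hu using Submodule.span_induction with
    | mem u hu => obtain ⟨j, rfl⟩ := hu; exact h j
    | zero => simp
    | add u₁ u₂ _ _ h1 h2 => rw [inner_add_left, h1, h2, add_zero]
    | smul c u _ h1 => rw [inner_smul_left, h1, mul_zero]
  have := hall w (by rw [hspan]; trivial)
  exact inner_self_eq_zero.mp this

/-- There are at most `n - 1` mutually orthogonal quantum Latin squares of order `n`. -/
theorem MOQLS_card_le (n t : ℕ) (hn : 2 ≤ n)
    (Ψ : Fin t → Fin n → Fin n → EuclideanSpace ℂ (Fin n))
    (hQ : ∀ s, IsQLS (Ψ s))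
    (hO : ∀ s u, s ≠ u → OrthQLS (Ψ s) (Ψ u)) :
    t ≤ n - 1 := by
  set z : Fin n := ⟨0, by omega⟩ with hz
  set o : Fin n := ⟨1, by omega⟩ with ho
  have hzo : z ≠ o := by simp [hz, ho, Fin.ext_iff]
  -- for each square, pick a column j with ⟨Ψ_s(0,j), Ψ_s(1,0)⟩ ≠ 0
  have hex : ∀ s : Fin t, ∃ j : Fin n, (inner ℂ (Ψ s z j) (Ψ s o z) : ℂ) ≠ 0 := by
    intro s
    by_contra hcon
    push_neg at hcon
    have h0 : Ψ s o z = 0 :=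
      eq_zero_of_inner_all_zero (fun j => Ψ s z j) ((hQ s).1 z) _ hcon
    have h1 : ‖Ψ s o z‖ = 1 := ((hQ s).2 z).1 o
    rw [h0] at h1
    simp at h1
  choose f hf using hex
  -- f s ≠ z, since column z is orthonormal
  have hfz : ∀ s, f s ≠ z := by
    intro s hfs
    apply hf s
    rw [hfs]
    exact ((hQ s).2 z).2 hzo
  -- f is injective, by orthogonality of the squares
  have hinj : Function.Injective f := by
    intro s u hsu
    by_contra hne
    have hcell : (z, f s) ≠ (o, z) := by
      intro h
      exact hzo (congrArg Prod.fst h)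
    have := hO s u hne z (f s) o z hcell
    rw [hsu] at this
    rcases mul_eq_zero.mp this with h | h
    · exact hf s (by rw [hsu]; exact h)
    · exact hf u h
  -- conclude: f maps injectively into {j : Fin n // j ≠ z}
  have hcard : t ≤ Fintype.card {j : Fin n // j ≠ z} := by
    have : Function.Injective (fun s : Fin t => (⟨f s, hfz s⟩ : {j : Fin n // j ≠ z})) := by
      intro s u h
      exact hinj (congrArg Subtype.val h)
    simpa using Fintype.card_le_of_injective _ this
  have : Fintype.card {j : Fin n // j ≠ z} = n - 1 := by
    rw [Fintype.card_subtype_compl, Fintype.card_subtype_eq, Fintype.card_fin]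
  omega
end
end

section
/- For every n ≥ 2, if Ψ_1, …, Ψ_{n−1} are n − 1 mutually orthogonal quantum Latin squares of order n, then they are classical: there exist, for each square Ψ_s, a unitary transformation U_s of ℂ^n and unit scalars λ^{(s)}_{ij} ∈ ℂ such that λ^{(s)}_{ij}·U_s(Ψ_s)_{ij} is a standard basis vector of ℂ^n for every s, i, j. -/
noncomputable section

/-- `n - 1` mutually orthogonal quantum Latin squares of order `n` are classical:
for each square there is a unitary of `ℂ^n` and unit scalars turning every entry
into a standard basis vector. -/
theorem MOQLS_max_classical (n : ℕ) (hn : 2 ≤ n)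
    (Ψ : Fin (n - 1) → Fin n → Fin n → EuclideanSpace ℂ (Fin n))
    (hQ : ∀ s, IsQLS (Ψ s))
    (hO : ∀ s u, s ≠ u → OrthQLS (Ψ s) (Ψ u)) :
    ∃ (U : Fin (n - 1) → (EuclideanSpace ℂ (Fin n) ≃ₗᵢ[ℂ] EuclideanSpace ℂ (Fin n)))
      (lam : Fin (n - 1) → Fin n → Fin n → ℂ),
      (∀ s i j, ‖lam s i j‖ = 1) ∧
      (∀ s i j, ∃ k, lam s i j • (U s) (Ψ s i j) = EuclideanSpace.single k (1 : ℂ)) := by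
  classical
  haveI : NeZero n := ⟨by omega⟩
  haveI : Nonempty (Fin n) := ⟨⟨0, by omega⟩⟩
  have hnorm : ∀ s i j, ‖Ψ s i j‖ = 1 := fun s i j => ((hQ s).1 i).1 j
  have hne : ∀ s i j, Ψ s i j ≠ 0 := by
    intro s i j h
    have h1 := hnorm s i j
    rw [h, norm_zero] at h1
    norm_num at h1
  -- column orthogonality
  have hcol : ∀ s (i k j : Fin n), i ≠ k → (inner ℂ (Ψ s i j) (Ψ s k j) : ℂ) = 0 :=
    fun s i k j h => ((hQ s).2 j).2 h
  -- squared inner products between entries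
  set a : Fin (n-1) → Fin n → Fin n → Fin n → Fin n → ℝ :=
    fun s i j k l => ‖(inner ℂ (Ψ s i j) (Ψ s k l) : ℂ)‖^2 with ha
  -- orthonormal basis from each row
  have hcard : Fintype.card (Fin n) = Module.finrank ℂ (EuclideanSpace ℂ (Fin n)) := by
    simp [finrank_euclideanSpace_fin]
  let B : Fin (n-1) → Fin n → OrthonormalBasis (Fin n) ℂ (EuclideanSpace ℂ (Fin n)) :=
    fun s i => OrthonormalBasis.mk ((hQ s).1 i)
      (((((hQ s).1 i).linearIndependent).span_eq_top_of_card_eq_finrank hcard).ge)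
  have hB : ∀ s i l, B s i l = Ψ s i l := by
    intro s i l
    simp [B, OrthonormalBasis.coe_mk]
  -- Parseval: expansion of any unit entry along any row
  have parseval : ∀ s (i j k : Fin n), ∑ l, a s i j k l = 1 := by
    intro s i j k
    have h1 : ∀ l, ((B s k).repr (Ψ s i j)) l = (inner ℂ (Ψ s k l) (Ψ s i j) : ℂ) := by
      intro l
      rw [(B s k).repr_apply_apply, hB]
    have h3 : ‖(B s k).repr (Ψ s i j)‖^2 = ∑ l, ‖((B s k).repr (Ψ s i j)) l‖^2 :=
      PiLp.norm_sq_eq_of_L2 _ _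
    rw [LinearIsometryEquiv.norm_map, hnorm s i j, one_pow] at h3
    calc ∑ l, a s i j k l = ∑ l, ‖((B s k).repr (Ψ s i j)) l‖^2 := by
          refine Finset.sum_congr rfl fun l _ => ?_
          simp only [ha]
          rw [h1 l, norm_inner_symm]
      _ = 1 := h3.symm
  -- counting argument: entries in different rows and columns are parallel or orthogonal
  have key : ∀ s (i j k l : Fin n), i ≠ k → j ≠ l →
      (inner ℂ (Ψ s i j) (Ψ s k l) : ℂ) = 0 ∨ a s i j k l = 1 := by
    intro s i j k l hik hjl
    have hexcl : ∀ (l' : Fin n) (s₀ : Fin (n-1)),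
        (inner ℂ (Ψ s₀ i j) (Ψ s₀ k l') : ℂ) ≠ 0 →
        ∀ s', s' ≠ s₀ → (inner ℂ (Ψ s' i j) (Ψ s' k l') : ℂ) = 0 := by
      intro l' s₀ h0 s' hs
      have hcell : (i, j) ≠ (k, l') := fun h => hik (congrArg Prod.fst h)
      have := hO s' s₀ hs i j k l' hcell
      rcases mul_eq_zero.1 this with h | h
      · exact h
      · exact absurd h h0
    have hSle : ∀ l' : Fin n, (∑ s', a s' i j k l') ≤ 1 := by
      intro l'
      by_cases hex : ∃ s₀, (inner ℂ (Ψ s₀ i j) (Ψ s₀ k l') : ℂ) ≠ 0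
      · obtain ⟨s₀, h0⟩ := hex
        have hsum : ∑ s', a s' i j k l' = a s₀ i j k l' := by
          refine Finset.sum_eq_single_of_mem s₀ (Finset.mem_univ _) fun s' _ hs => ?_
          simp only [ha]
          rw [hexcl l' s₀ h0 s' hs]
          norm_num
        rw [hsum]
        have hcs : ‖(inner ℂ (Ψ s₀ i j) (Ψ s₀ k l') : ℂ)‖ ≤ 1 := by
          have := norm_inner_le_norm (𝕜 := ℂ) (Ψ s₀ i j) (Ψ s₀ k l')
          rwa [hnorm, hnorm, mul_one] at this
        simp only [ha]
        exact pow_le_one₀ (norm_nonneg _) hcs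
      · push_neg at hex
        have hsum : ∑ s', a s' i j k l' = 0 := by
          refine Finset.sum_eq_zero fun s' _ => ?_
          simp only [ha]
          rw [hex s']
          norm_num
        rw [hsum]; norm_num
    have hrowsum : ∀ s', ∑ l' ∈ Finset.univ.erase j, a s' i j k l' = 1 := by
      intro s'
      have h0 : a s' i j k j = 0 := by
        simp only [ha]
        rw [hcol s' i k j hik]
        norm_num
      have hp := parseval s' i j k
      rwa [← Finset.sum_erase_add _ _ (Finset.mem_univ j), h0, add_zero] at hp
    have heq : ∑ l' ∈ Finset.univ.erase j, (∑ s', a s' i j k l')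
        = ∑ l' ∈ Finset.univ.erase j, (1 : ℝ) := by
      rw [Finset.sum_comm]
      simp [hrowsum, Finset.sum_const, Finset.card_erase_of_mem, Finset.card_univ]
    have hall := (Finset.sum_eq_sum_iff_of_le (fun l' _ => hSle l')).1 heq
    have hSl : ∑ s', a s' i j k l = 1 :=
      hall l (Finset.mem_erase.2 ⟨Ne.symm hjl, Finset.mem_univ _⟩)
    by_cases h0 : (inner ℂ (Ψ s i j) (Ψ s k l) : ℂ) = 0
    · exact Or.inl h0
    · right
      have hsum : ∑ s', a s' i j k l = a s i j k l := by
        refine Finset.sum_eq_single_of_mem s (Finset.mem_univ _) fun s' _ hs => ?_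
        simp only [ha]
        rw [hexcl l s h0 s' hs]
        norm_num
      rw [hsum] at hSl
      exact hSl
  -- every entry is a unit multiple of an entry of row 0
  have main : ∀ s i j, ∃ (c : ℂ) (m : Fin n), ‖c‖ = 1 ∧
      c • (B s 0).repr (Ψ s i j) = EuclideanSpace.single m (1 : ℂ) := by
    intro s i j
    have hpar : ∃ (m : Fin n) (d : ℂ), ‖d‖ = 1 ∧ Ψ s i j = d • Ψ s 0 m := by
      by_cases hi : i = 0
      · exact ⟨j, 1, by simp, by simp [hi]⟩
      · have hps := parseval s i j 0
        have hex : ∃ m, a s i j 0 m ≠ 0 := by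
          by_contra hno
          push_neg at hno
          rw [Finset.sum_eq_zero (fun m _ => hno m)] at hps
          norm_num at hps
        obtain ⟨m, hm⟩ := hex
        have hmj : j ≠ m := by
          rintro rfl
          refine hm ?_
          simp only [ha]
          rw [hcol s i 0 j hi]
          norm_num
        have h01 := key s i j 0 m hi hmj
        have h1 : ‖(inner ℂ (Ψ s i j) (Ψ s 0 m) : ℂ)‖ = 1 := by
          rcases h01 with h | h
          · exfalso
            refine hm ?_
            simp only [ha]
            rw [h]
            norm_num
          · simp only [ha] at h
            nlinarith [norm_nonneg ((inner ℂ (Ψ s i j) (Ψ s 0 m) : ℂ))]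
        have h2 : ‖(inner ℂ (Ψ s 0 m) (Ψ s i j) : ℂ)‖ = ‖Ψ s 0 m‖ * ‖Ψ s i j‖ := by
          rw [norm_inner_symm, h1, hnorm, hnorm, mul_one]
        obtain ⟨r, hr0, hr⟩ := (norm_inner_eq_norm_iff (hne s 0 m) (hne s i j)).1 h2
        refine ⟨m, r, ?_, hr⟩
        have hh := hnorm s i j
        rw [hr, norm_smul, hnorm, mul_one] at hh
        exact hh
    obtain ⟨m, d, hd, hpsi⟩ := hpar
    refine ⟨(starRingEnd ℂ) d, m, by simpa using hd, ?_⟩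
    rw [hpsi, map_smul, smul_smul]
    have hdd : (starRingEnd ℂ) d * d = 1 := by
      rw [mul_comm, Complex.mul_conj]
      norm_cast
      rw [← Complex.sq_norm, hd, one_pow]
    rw [hdd, one_smul, ← hB s 0 m, (B s 0).repr_self]
  choose lam m h1 h2 using main
  exact ⟨fun s => (B s 0).repr, lam, h1, fun s i j => ⟨m s i j, h2 s i j⟩⟩
end
end

section
/- Every pair of orthogonal quantum Latin squares of order 4 is classical: if Ψ and Φ are orthogonal quantum Latin squares of order 4, then there exist unitary transformations U, V of ℂ^4 and unit scalars λ_{ij}, μ_{ij} ∈ ℂ such that every λ_{ij}·U(Ψ_{ij}) and every μ_{ij}·V(Φ_{ij}) is a standard basis vector of ℂ^4. -/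
noncomputable section

local notation "cnj" => starRingEnd ℂ

lemma sum_four (f : Fin 4 → ℂ) (j p q m : Fin 4)
    (h1 : j ≠ p) (h2 : j ≠ q) (h3 : j ≠ m) (h4 : p ≠ q) (h5 : p ≠ m) (h6 : q ≠ m)
    (hc : ∀ r, r = j ∨ r = p ∨ r = q ∨ r = m) :
    ∑ r, f r = f j + f p + f q + f m := by
  have huniv : (Finset.univ : Finset (Fin 4)) = {j, p, q, m} := by
    apply Finset.ext; intro r
    simp only [Finset.mem_univ, Finset.mem_insert, Finset.mem_singleton, true_iff]
    exact hc r
  rw [huniv, Finset.sum_insert (by simp [h1, h2, h3]),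
    Finset.sum_insert (by simp [h4, h5]), Finset.sum_insert (by simp [h6]),
    Finset.sum_singleton]
  ring

/-- Helper: the case where `yb p = 0`. -/
lemma helper (x xb yb xc yc : Fin 4 → ℂ) (j p q m : Fin 4)
    (h1 : j ≠ p) (h2 : j ≠ q) (h3 : j ≠ m) (h4 : p ≠ q) (h5 : p ≠ m) (h6 : q ≠ m)
    (hc : ∀ r, r = j ∨ r = p ∨ r = q ∨ r = m)
    (hxp : x p ≠ 0) (hxq : x q ≠ 0) (hxj : x j = 0) (hxm : x m = 0)
    (hxbj : xb j = 0) (hxcj : xc j = 0)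
    (hybj : yb j = 0) (hybm : yb m = 0) (hybp : yb p = 0)
    (hycj : yc j = 0) (hycm : yc m = 0)
    (cellb : ∀ r, xb r * yb r = 0) (cellc : ∀ r, xc r * yc r = 0)
    (nxb : ∑ r, cnj (xb r) * xb r = 1) (nxc : ∑ r, cnj (xc r) * xc r = 1)
    (nyb : ∑ r, cnj (yb r) * yb r = 1) (nyc : ∑ r, cnj (yc r) * yc r = 1)
    (oxb : ∑ r, cnj (x r) * xb r = 0) (oxc : ∑ r, cnj (x r) * xc r = 0)
    (oybc : ∑ r, cnj (yb r) * yc r = 0) (obc : ∑ r, cnj (xb r) * xc r = 0) : False := by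
  have hybq : yb q ≠ 0 := by
    intro h
    rw [sum_four _ j p q m h1 h2 h3 h4 h5 h6 hc] at nyb
    simp [hybj, hybp, h, hybm] at nyb
  have hxbq : xb q = 0 := (mul_eq_zero.mp (cellb q)).resolve_right hybq
  have hxbp : xb p = 0 := by
    rw [sum_four _ j p q m h1 h2 h3 h4 h5 h6 hc] at oxb
    simp [hxj, hxm, hxbq] at oxb
    rcases oxb with h | h
    · exact absurd h hxp
    · exact h
  have hxbm : xb m ≠ 0 := by
    intro h
    rw [sum_four _ j p q m h1 h2 h3 h4 h5 h6 hc] at nxb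
    simp [hxbj, hxbp, hxbq, h] at nxb
  have hycq : yc q = 0 := by
    rw [sum_four _ j p q m h1 h2 h3 h4 h5 h6 hc] at oybc
    simp [hybj, hybp, hybm] at oybc
    rcases oybc with h | h
    · exact absurd h hybq
    · exact h
  have hycp : yc p ≠ 0 := by
    intro h
    rw [sum_four _ j p q m h1 h2 h3 h4 h5 h6 hc] at nyc
    simp [hycj, h, hycq, hycm] at nyc
  have hxcp : xc p = 0 := (mul_eq_zero.mp (cellc p)).resolve_right hycp
  have hxcq : xc q = 0 := by
    rw [sum_four _ j p q m h1 h2 h3 h4 h5 h6 hc] at oxc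
    simp [hxj, hxm, hxcp] at oxc
    rcases oxc with h | h
    · exact absurd h hxq
    · exact h
  have hxcm : xc m ≠ 0 := by
    intro h
    rw [sum_four _ j p q m h1 h2 h3 h4 h5 h6 hc] at nxc
    simp [hxcj, hxcp, hxcq, h] at nxc
  rw [sum_four _ j p q m h1 h2 h3 h4 h5 h6 hc] at obc
  simp [hxbj, hxbp, hxbq] at obc
  rcases obc with h | h
  · exact hxbm h
  · exact hxcm h

/-- Core: a cell with two nonzero Ψ-coordinates in a column is impossible. -/
lemma core (x y xb yb xc yc : Fin 4 → ℂ) (j p q m : Fin 4)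
    (h1 : j ≠ p) (h2 : j ≠ q) (h3 : j ≠ m) (h4 : p ≠ q) (h5 : p ≠ m) (h6 : q ≠ m)
    (hc : ∀ r, r = j ∨ r = p ∨ r = q ∨ r = m)
    (hxp : x p ≠ 0) (hxq : x q ≠ 0)
    (hxj : x j = 0) (hyj : y j = 0) (hxbj : xb j = 0) (hybj : yb j = 0)
    (hxcj : xc j = 0) (hycj : yc j = 0)
    (cell : ∀ r, x r * y r = 0) (cellb : ∀ r, xb r * yb r = 0)
    (cellc : ∀ r, xc r * yc r = 0)
    (ny : ∑ r, cnj (y r) * y r = 1)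
    (nxb : ∑ r, cnj (xb r) * xb r = 1) (nxc : ∑ r, cnj (xc r) * xc r = 1)
    (nyb : ∑ r, cnj (yb r) * yb r = 1) (nyc : ∑ r, cnj (yc r) * yc r = 1)
    (oxb : ∑ r, cnj (x r) * xb r = 0) (oxc : ∑ r, cnj (x r) * xc r = 0)
    (obc : ∑ r, cnj (xb r) * xc r = 0)
    (oyb : ∑ r, cnj (y r) * yb r = 0) (oyc : ∑ r, cnj (y r) * yc r = 0)
    (oybc : ∑ r, cnj (yb r) * yc r = 0) : False := by
  have hc' : ∀ r, r = j ∨ r = q ∨ r = p ∨ r = m := fun r => by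
    rcases hc r with h | h | h | h <;> tauto
  have hyp : y p = 0 := (mul_eq_zero.mp (cell p)).resolve_left hxp
  have hyq : y q = 0 := (mul_eq_zero.mp (cell q)).resolve_left hxq
  have hym : y m ≠ 0 := by
    intro h
    rw [sum_four _ j p q m h1 h2 h3 h4 h5 h6 hc] at ny
    simp [hyj, hyp, hyq, h] at ny
  have hxm : x m = 0 := (mul_eq_zero.mp (cell m)).resolve_right hym
  have hybm : yb m = 0 := by
    rw [sum_four _ j p q m h1 h2 h3 h4 h5 h6 hc] at oyb
    simp [hyj, hyp, hyq] at oyb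
    rcases oyb with h | h
    · exact absurd h hym
    · exact h
  have hycm : yc m = 0 := by
    rw [sum_four _ j p q m h1 h2 h3 h4 h5 h6 hc] at oyc
    simp [hyj, hyp, hyq] at oyc
    rcases oyc with h | h
    · exact absurd h hym
    · exact h
  by_cases hbp : yb p = 0
  · exact helper x xb yb xc yc j p q m h1 h2 h3 h4 h5 h6 hc hxp hxq hxj hxm hxbj hxcj
      hybj hybm hbp hycj hycm cellb cellc nxb nxc nyb nyc oxb oxc oybc obc
  by_cases hbq : yb q = 0
  · exact helper x xb yb xc yc j q p m h2 h1 h3 (Ne.symm h4) h6 h5 hc' hxq hxp hxj hxm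
      hxbj hxcj hybj hybm hbq hycj hycm cellb cellc nxb nxc nyb nyc oxb oxc oybc obc
  · -- yb p ≠ 0 and yb q ≠ 0
    have hxbp : xb p = 0 := (mul_eq_zero.mp (cellb p)).resolve_right hbp
    have hxbq : xb q = 0 := (mul_eq_zero.mp (cellb q)).resolve_right hbq
    have hxbm : xb m ≠ 0 := by
      intro h
      rw [sum_four _ j p q m h1 h2 h3 h4 h5 h6 hc] at nxb
      simp [hxbj, hxbp, hxbq, h] at nxb
    have hycp : yc p ≠ 0 := by
      intro ha
      have hq : yc q ≠ 0 := by
        intro hb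
        rw [sum_four _ j p q m h1 h2 h3 h4 h5 h6 hc] at nyc
        simp [hycj, ha, hb, hycm] at nyc
      rw [sum_four _ j p q m h1 h2 h3 h4 h5 h6 hc] at oybc
      simp [hybj, hybm, ha, hycm] at oybc
      rcases oybc with h' | h'
      · exact hbq h'
      · exact hq h'
    have hycq : yc q ≠ 0 := by
      intro ha
      rw [sum_four _ j p q m h1 h2 h3 h4 h5 h6 hc] at oybc
      simp [hybj, hybm, ha, hycm] at oybc
      rcases oybc with h' | h'
      · exact hbp h'
      · exact hycp h'
    have hxcp : xc p = 0 := (mul_eq_zero.mp (cellc p)).resolve_right hycp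
    have hxcq : xc q = 0 := (mul_eq_zero.mp (cellc q)).resolve_right hycq
    have hxcm : xc m ≠ 0 := by
      intro h
      rw [sum_four _ j p q m h1 h2 h3 h4 h5 h6 hc] at nxc
      simp [hxcj, hxcp, hxcq, h] at nxc
    rw [sum_four _ j p q m h1 h2 h3 h4 h5 h6 hc] at obc
    simp [hxbj, hxbp, hxbq] at obc
    rcases obc with h | h
    · exact hxbm h
    · exact hxcm h

lemma fourth : ∀ j p q : Fin 4, p ≠ q → p ≠ j → q ≠ j →
    ∃ m, j ≠ p ∧ j ≠ q ∧ j ≠ m ∧ p ≠ q ∧ p ≠ m ∧ q ≠ m ∧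
      ∀ r, r = j ∨ r = p ∨ r = q ∨ r = m := by decide

lemma rows : ∀ i : Fin 4, i ≠ 0 →
    ∃ b c : Fin 4, b ≠ 0 ∧ c ≠ 0 ∧ b ≠ i ∧ c ≠ i ∧ b ≠ c := by decide

lemma inner_eq (u v : EuclideanSpace ℂ (Fin 4)) :
    (inner ℂ u v : ℂ) = ∑ r, cnj (u r) * v r := by
  simp [PiLp.inner_apply, RCLike.inner_apply', mul_comm]

lemma normalized (Ψ Φ : Fin 4 → Fin 4 → EuclideanSpace ℂ (Fin 4))
    (hΨ : IsQLS Ψ) (hΦ : IsQLS Φ) (hO : OrthQLS Ψ Φ)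
    (h0 : ∀ j, Ψ 0 j = EuclideanSpace.single j (1 : ℂ))
    (h0' : ∀ j, Φ 0 j = EuclideanSpace.single j (1 : ℂ)) :
    ∀ i j, ∃ (k : Fin 4) (μ : ℂ), ‖μ‖ = 1 ∧ μ • Ψ i j = EuclideanSpace.single k (1 : ℂ) := by
  have colΨ : ∀ j a b, (inner ℂ (Ψ a j) (Ψ b j) : ℂ) = if a = b then 1 else 0 :=
    fun j => orthonormal_iff_ite.mp (hΨ.2 j)
  have colΦ : ∀ j a b, (inner ℂ (Φ a j) (Φ b j) : ℂ) = if a = b then 1 else 0 :=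
    fun j => orthonormal_iff_ite.mp (hΦ.2 j)
  -- coordinate j of any entry in a column j, row ≠ 0, vanishes
  have coordΨ : ∀ j a, a ≠ 0 → Ψ a j j = 0 := by
    intro j a ha
    have h := colΨ j 0 a
    rw [if_neg (Ne.symm ha), h0 j, EuclideanSpace.inner_single_left] at h
    simpa using h
  have coordΦ : ∀ j a, a ≠ 0 → Φ a j j = 0 := by
    intro j a ha
    have h := colΦ j 0 a
    rw [if_neg (Ne.symm ha), h0' j, EuclideanSpace.inner_single_left] at h
    simpa using h
  -- cellwise disjoint supports in rows ≠ 0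
  have cellD : ∀ (a : Fin 4) j, a ≠ 0 → ∀ m, Ψ a j m * Φ a j m = 0 := by
    intro a j ha m
    have hne : ((0 : Fin 4), m) ≠ (a, j) := fun h => ha (congrArg Prod.fst h).symm
    have h := hO 0 m a j hne
    rw [h0 m, h0' m, EuclideanSpace.inner_single_left, EuclideanSpace.inner_single_left] at h
    simpa using h
  -- norms and orthogonality as sums
  have nΨ : ∀ j a, ∑ r, cnj (Ψ a j r) * Ψ a j r = 1 := by
    intro j a
    have h := colΨ j a a
    rw [if_pos rfl, inner_eq] at h
    exact h
  have nΦ : ∀ j a, ∑ r, cnj (Φ a j r) * Φ a j r = 1 := by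
    intro j a
    have h := colΦ j a a
    rw [if_pos rfl, inner_eq] at h
    exact h
  have oΨ : ∀ j a b, a ≠ b → ∑ r, cnj (Ψ a j r) * Ψ b j r = 0 := by
    intro j a b hab
    have h := colΨ j a b
    rw [if_neg hab, inner_eq] at h
    exact h
  have oΦ : ∀ j a b, a ≠ b → ∑ r, cnj (Φ a j r) * Φ b j r = 0 := by
    intro j a b hab
    have h := colΦ j a b
    rw [if_neg hab, inner_eq] at h
    exact h
  intro i j
  rcases eq_or_ne i 0 with rfl | hi
  · exact ⟨j, 1, by simp, by rw [one_smul, h0 j]⟩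
  obtain ⟨b, c, hb0, hc0, hbi, hci, hbc⟩ := rows i hi
  -- Ψ i j is nonzero somewhere
  have hex : ∃ k, Ψ i j k ≠ 0 := by
    by_contra h
    push_neg at h
    have h1 := nΨ j i
    simp [h] at h1
  obtain ⟨k, hk⟩ := hex
  have hall : ∀ r, r ≠ k → Ψ i j r = 0 := by
    intro r hr
    by_contra hxr
    have hkj : k ≠ j := fun h => hk (h ▸ coordΨ j i hi)
    have hrj : r ≠ j := fun h => hxr (h ▸ coordΨ j i hi)
    obtain ⟨m, d1, d2, d3, d4, d5, d6, hcov⟩ := fourth j k r (Ne.symm hr) hkj hrj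
    exact core (fun r => Ψ i j r) (fun r => Φ i j r) (fun r => Ψ b j r) (fun r => Φ b j r)
      (fun r => Ψ c j r) (fun r => Φ c j r) j k r m d1 d2 d3 d4 d5 d6 hcov hk hxr
      (coordΨ j i hi) (coordΦ j i hi) (coordΨ j b hb0) (coordΦ j b hb0)
      (coordΨ j c hc0) (coordΦ j c hc0)
      (cellD i j hi) (cellD b j hb0) (cellD c j hc0)
      (nΦ j i) (nΨ j b) (nΨ j c) (nΦ j b) (nΦ j c)
      (oΨ j i b (Ne.symm hbi)) (oΨ j i c (Ne.symm hci)) (oΨ j b c hbc)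
      (oΦ j i b (Ne.symm hbi)) (oΦ j i c (Ne.symm hci)) (oΦ j b c hbc)
  -- norm of the single coordinate
  have hnorm : cnj (Ψ i j k) * Ψ i j k = 1 := by
    have h := nΨ j i
    rw [Finset.sum_eq_single k (fun r _ hr => by rw [hall r hr]; ring) (by simp)] at h
    exact h
  have hnk : ‖Ψ i j k‖ = 1 := by
    have h2 : ((Complex.normSq (Ψ i j k) : ℂ)) = 1 := by
      rw [Complex.normSq_eq_conj_mul_self]; exact hnorm
    have h3 : Complex.normSq (Ψ i j k) = 1 := by exact_mod_cast h2
    have h4 : ‖Ψ i j k‖ ^ 2 = 1 := by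
      rw [← Complex.sq_norm] at h3
      simpa using h3
    nlinarith [norm_nonneg (Ψ i j k)]
  refine ⟨k, (Ψ i j k)⁻¹, by rw [norm_inv, hnk]; norm_num, ?_⟩
  ext r
  simp only [PiLp.smul_apply, smul_eq_mul, EuclideanSpace.single_apply]
  rcases eq_or_ne r k with rfl | hr
  · rw [if_pos rfl, inv_mul_cancel₀ hk]
  · rw [if_neg hr, hall r hr, mul_zero]

/-- Build the orthonormal-basis unitary from row 0. -/
def rowBasis (Ψ : Fin 4 → Fin 4 → EuclideanSpace ℂ (Fin 4))
    (h : Orthonormal ℂ (fun j => Ψ 0 j)) :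
    OrthonormalBasis (Fin 4) ℂ (EuclideanSpace ℂ (Fin 4)) :=
  (basisOfOrthonormalOfCardEqFinrank h (by simp)).toOrthonormalBasis
    (by rwa [coe_basisOfOrthonormalOfCardEqFinrank])

lemma rowBasis_apply (Ψ : Fin 4 → Fin 4 → EuclideanSpace ℂ (Fin 4))
    (h : Orthonormal ℂ (fun j => Ψ 0 j)) (j : Fin 4) : rowBasis Ψ h j = Ψ 0 j := by
  rw [rowBasis, Module.Basis.coe_toOrthonormalBasis, coe_basisOfOrthonormalOfCardEqFinrank]

/-- Every pair of orthogonal quantum Latin squares of order 4 is classical. -/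
theorem two_MOQLS_4_classical
    (Ψ Φ : Fin 4 → Fin 4 → EuclideanSpace ℂ (Fin 4))
    (hΨ : IsQLS Ψ) (hΦ : IsQLS Φ) (hO : OrthQLS Ψ Φ) :
    ∃ (U V : EuclideanSpace ℂ (Fin 4) ≃ₗᵢ[ℂ] EuclideanSpace ℂ (Fin 4))
      (lam mu : Fin 4 → Fin 4 → ℂ),
      (∀ i j, ‖lam i j‖ = 1) ∧ (∀ i j, ‖mu i j‖ = 1) ∧
      (∀ i j, ∃ k, lam i j • U (Ψ i j) = EuclideanSpace.single k (1 : ℂ)) ∧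
      (∀ i j, ∃ k, mu i j • V (Φ i j) = EuclideanSpace.single k (1 : ℂ)) := by
  set U := (rowBasis Ψ (hΨ.1 0)).repr with hUdef
  set V := (rowBasis Φ (hΦ.1 0)).repr with hVdef
  set Ψ' : Fin 4 → Fin 4 → EuclideanSpace ℂ (Fin 4) := fun i j => U (Ψ i j) with hΨ'def
  set Φ' : Fin 4 → Fin 4 → EuclideanSpace ℂ (Fin 4) := fun i j => V (Φ i j) with hΦ'def
  have hinnΨ : ∀ i j k l, (inner ℂ (Ψ' i j) (Ψ' k l) : ℂ) = inner ℂ (Ψ i j) (Ψ k l) :=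
    fun i j k l => U.inner_map_map _ _
  have hinnΦ : ∀ i j k l, (inner ℂ (Φ' i j) (Φ' k l) : ℂ) = inner ℂ (Φ i j) (Φ k l) :=
    fun i j k l => V.inner_map_map _ _
  have hΨ' : IsQLS Ψ' := by
    constructor
    · intro i
      rw [orthonormal_iff_ite]
      intro a b
      rw [hinnΨ]
      exact orthonormal_iff_ite.mp (hΨ.1 i) a b
    · intro j
      rw [orthonormal_iff_ite]
      intro a b
      rw [hinnΨ]
      exact orthonormal_iff_ite.mp (hΨ.2 j) a b
  have hΦ' : IsQLS Φ' := by
    constructor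
    · intro i
      rw [orthonormal_iff_ite]
      intro a b
      rw [hinnΦ]
      exact orthonormal_iff_ite.mp (hΦ.1 i) a b
    · intro j
      rw [orthonormal_iff_ite]
      intro a b
      rw [hinnΦ]
      exact orthonormal_iff_ite.mp (hΦ.2 j) a b
  have hO' : OrthQLS Ψ' Φ' := by
    intro i j k l h
    rw [hinnΨ, hinnΦ]
    exact hO i j k l h
  have hO'' : OrthQLS Φ' Ψ' := by
    intro i j k l h
    rw [mul_comm]
    exact hO' i j k l h
  have h0Ψ : ∀ j, Ψ' 0 j = EuclideanSpace.single j (1 : ℂ) := by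
    intro j
    show U (Ψ 0 j) = _
    rw [← rowBasis_apply Ψ (hΨ.1 0) j, hUdef]
    exact (rowBasis Ψ (hΨ.1 0)).repr_self j
  have h0Φ : ∀ j, Φ' 0 j = EuclideanSpace.single j (1 : ℂ) := by
    intro j
    show V (Φ 0 j) = _
    rw [← rowBasis_apply Φ (hΦ.1 0) j, hVdef]
    exact (rowBasis Φ (hΦ.1 0)).repr_self j
  have H1 := normalized Ψ' Φ' hΨ' hΦ' hO' h0Ψ h0Φ
  have H2 := normalized Φ' Ψ' hΦ' hΨ' hO'' h0Φ h0Ψ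
  choose k1 lam hlam using H1
  choose k2 mu hmu using H2
  exact ⟨U, V, lam, mu, fun i j => (hlam i j).1, fun i j => (hmu i j).1,
    fun i j => ⟨k1 i j, (hlam i j).2⟩, fun i j => ⟨k2 i j, (hmu i j).2⟩⟩
end
end

section
/- Let Ψ be a quantum Latin square of order n all of whose entries have weight at most 2 (no entry has three or more nonzero coordinates). Then there exists a quantum Latin square Ψ' of order n whose every entry is a standard basis vector of ℂ^n (i.e., a classical Latin square) such that for every quantum Latin square Φ of order n: if Ψ and Φ are orthogonal, then Ψ' and Φ are orthogonal as well. -/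
noncomputable section

/-- The weight of a vector in `ℂ^n`: the number of nonzero coordinates. -/
def weight {n : ℕ} (v : EuclideanSpace ℂ (Fin n)) : ℕ :=
  (Finset.univ.filter fun k => v k ≠ 0).card

/-! ### Auxiliary machinery

We choose, for each vector of weight at most 2, a distinguished coordinate of its
support in such a way that two such vectors receiving the same distinguished
coordinate can never be orthogonal.  For weight-2 vectors with the same support
`{a, b}` (`a < b`), the choice is governed by a "half-plane" rule on the pair of
coordinates, designed so that of any two orthogonal vectors supported on `{a, b}`,
exactly one selects `a`. -/

/-- `z` lies in the canonical "positive half" of `ℂ \ {0}`: for `z ≠ 0`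
exactly one of `z, -z` satisfies this. -/
def PosHalf (z : ℂ) : Prop := 0 < z.im ∨ (z.im = 0 ∧ 0 < z.re)

lemma posHalf_resolve (s t : ℂ) (hs : s ≠ 0) (c : ℝ) (hc : 0 < c)
    (h : (starRingEnd ℂ) s * t = -(c : ℂ)) : ¬ (PosHalf s ↔ PosHalf t) := by
  have e1 : s.re * t.re + s.im * t.im = -c := by
    have := congrArg Complex.re h
    simpa [Complex.mul_re] using this
  have e2 : s.re * t.im - s.im * t.re = 0 := by
    have := congrArg Complex.im h
    simp [Complex.mul_im] at this
    linarith
  have hs' : s.re ≠ 0 ∨ s.im ≠ 0 := by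
    by_contra hcon
    push_neg at hcon
    exact hs (Complex.ext hcon.1 hcon.2)
  have hsq : 0 < s.re^2 + s.im^2 := by
    rcases hs' with h1 | h1
    · nlinarith [sq_nonneg s.im, sq_pos_of_ne_zero h1]
    · nlinarith [sq_nonneg s.re, sq_pos_of_ne_zero h1]
  have him : (s.re^2 + s.im^2) * t.im = -c * s.im := by
    linear_combination s.re * e2 + s.im * e1
  have hre : (s.re^2 + s.im^2) * t.re = -c * s.re := by
    linear_combination s.re * e1 - s.im * e2
  rintro hiff
  rcases lt_trichotomy s.im 0 with h1 | h1 | h1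
  · have ht : 0 < t.im := by nlinarith
    have hps : PosHalf s := hiff.mpr (Or.inl ht)
    rcases hps with h2 | h2
    · linarith
    · linarith [h2.1]
  · have hsre : s.re ≠ 0 := by
      rcases hs' with h2 | h2
      · exact h2
      · exact absurd h1 h2
    have htim : t.im = 0 := by
      have h4 : (s.re^2 + s.im^2) * t.im = 0 := by rw [him, h1]; ring
      rcases mul_eq_zero.mp h4 with h3 | h3
      · exact absurd h3 (ne_of_gt hsq)
      · exact h3
    rcases lt_trichotomy s.re 0 with h2 | h2 | h2
    · have hns : ¬ PosHalf s := by
        rintro (h3 | h3)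
        · linarith
        · linarith [h3.2]
      have hnt : ¬ PosHalf t := fun ht => hns (hiff.mpr ht)
      have htre : 0 < t.re := by nlinarith
      exact hnt (Or.inr ⟨htim, htre⟩)
    · exact hsre h2
    · have hps : PosHalf s := Or.inr ⟨h1, h2⟩
      have hpt : PosHalf t := hiff.mp hps
      have htre : t.re < 0 := by nlinarith
      rcases hpt with h3 | h3
      · linarith
      · linarith [h3.2]
  · have hps : PosHalf s := Or.inl h1
    have hpt := hiff.mp hps
    have ht : t.im < 0 := by nlinarith
    rcases hpt with h2 | h2
    · linarith
    · linarith [h2.1]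

/-- The tie-breaking condition choosing the "first" coordinate. -/
def Cnd (x y : ℂ) : Prop :=
  ‖y‖ < ‖x‖ ∨
    (‖x‖ = ‖y‖ ∧ PosHalf (x * (starRingEnd ℂ) y))

lemma cnd_resolve (va vb wa wb : ℂ) (hva : va ≠ 0) (hvb : vb ≠ 0)
    (hwa : wa ≠ 0) (hwb : wb ≠ 0)
    (E : (starRingEnd ℂ) va * wa + (starRingEnd ℂ) vb * wb = 0) :
    ¬ (Cnd va vb ↔ Cnd wa wb) := by
  intro hiff
  have E' : (starRingEnd ℂ) va * wa = -((starRingEnd ℂ) vb * wb) := by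
    linear_combination E
  have habs : ‖va‖ * ‖wa‖ = ‖vb‖ * ‖wb‖ := by
    have := congrArg (‖·‖) E'
    simpa [norm_mul, map_neg] using this
  have pva : 0 < ‖va‖ := norm_pos_iff.mpr hva
  have pvb : 0 < ‖vb‖ := norm_pos_iff.mpr hvb
  have pwa : 0 < ‖wa‖ := norm_pos_iff.mpr hwa
  have pwb : 0 < ‖wb‖ := norm_pos_iff.mpr hwb
  have hv : ‖va‖ = ‖vb‖ := by
    rcases lt_trichotomy (‖vb‖) (‖va‖) with h1 | h1 | h1
    · have hcw : Cnd wa wb := hiff.mp (Or.inl h1)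
      rcases hcw with h2 | h2
      · nlinarith
      · nlinarith [h2.1]
    · exact h1.symm
    · have hnc : ¬ Cnd va vb := by
        rintro (h2 | h2)
        · linarith
        · linarith [h2.1]
      have hncw : ¬ Cnd wa wb := fun hc => hnc (hiff.mpr hc)
      have hw2 : ‖wa‖ ≤ ‖wb‖ := by
        by_contra hcon
        push_neg at hcon
        exact hncw (Or.inl hcon)
      nlinarith
  have hwabs : ‖wa‖ = ‖wb‖ := by nlinarith
  have hiff' : PosHalf (va * (starRingEnd ℂ) vb) ↔ PosHalf (wa * (starRingEnd ℂ) wb) := by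
    constructor
    · intro hp
      have := hiff.mp (Or.inr ⟨hv, hp⟩)
      rcases this with h2 | h2
      · exact absurd h2 (by rw [hwabs]; exact lt_irrefl _)
      · exact h2.2
    · intro hp
      have := hiff.mpr (Or.inr ⟨hwabs, hp⟩)
      rcases this with h2 | h2
      · exact absurd h2 (by rw [hv]; exact lt_irrefl _)
      · exact h2.2
  have hs : va * (starRingEnd ℂ) vb ≠ 0 :=
    mul_ne_zero hva (by simpa using hvb)
  have key : (starRingEnd ℂ) (va * (starRingEnd ℂ) vb) * (wa * (starRingEnd ℂ) wb)
      = -((Complex.normSq vb * Complex.normSq wb : ℝ) : ℂ) := by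
    have h1 : (starRingEnd ℂ) (va * (starRingEnd ℂ) vb) = (starRingEnd ℂ) va * vb := by
      simp [map_mul]
    rw [h1]
    calc (starRingEnd ℂ) va * vb * (wa * (starRingEnd ℂ) wb)
        = ((starRingEnd ℂ) va * wa) * (vb * (starRingEnd ℂ) wb) := by ring
      _ = -((starRingEnd ℂ) vb * wb) * (vb * (starRingEnd ℂ) wb) := by rw [E']
      _ = -((vb * (starRingEnd ℂ) vb) * (wb * (starRingEnd ℂ) wb)) := by ring
      _ = -((Complex.normSq vb * Complex.normSq wb : ℝ) : ℂ) := by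
          rw [Complex.mul_conj, Complex.mul_conj]
          push_cast
          ring
  have hcpos : 0 < Complex.normSq vb * Complex.normSq wb :=
    mul_pos (Complex.normSq_pos.mpr hvb) (Complex.normSq_pos.mpr hwb)
  exact posHalf_resolve _ _ hs _ hcpos key hiff'

open scoped Classical in
/-- Pick a distinguished nonzero coordinate of `v`. -/
noncomputable def pick {n : ℕ} (v : EuclideanSpace ℂ (Fin n))
    (hv : (Finset.univ.filter fun k => v k ≠ 0).Nonempty) : Fin n :=
  if Cnd (v ((Finset.univ.filter fun k => v k ≠ 0).min' hv))
         (v ((Finset.univ.filter fun k => v k ≠ 0).max' hv))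
  then (Finset.univ.filter fun k => v k ≠ 0).min' hv
  else (Finset.univ.filter fun k => v k ≠ 0).max' hv

lemma pick_mem {n : ℕ} (v : EuclideanSpace ℂ (Fin n))
    (hv : (Finset.univ.filter fun k => v k ≠ 0).Nonempty) :
    pick v hv ∈ Finset.univ.filter fun k => v k ≠ 0 := by
  unfold pick
  by_cases h : Cnd (v ((Finset.univ.filter fun k => v k ≠ 0).min' hv))
      (v ((Finset.univ.filter fun k => v k ≠ 0).max' hv))
  · rw [if_pos h]; exact Finset.min'_mem _ hv
  · rw [if_neg h]; exact Finset.max'_mem _ hv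

lemma pick_ne_zero {n : ℕ} (v : EuclideanSpace ℂ (Fin n))
    (hv : (Finset.univ.filter fun k => v k ≠ 0).Nonempty) : v (pick v hv) ≠ 0 := by
  have := pick_mem v hv
  simpa using this

open scoped Classical in
lemma pick_pair {n : ℕ} (v : EuclideanSpace ℂ (Fin n))
    (hv : (Finset.univ.filter fun k => v k ≠ 0).Nonempty)
    (a b : Fin n) (hab : a < b)
    (hmem : ∀ x, v x ≠ 0 ↔ (x = a ∨ x = b)) :
    pick v hv = if Cnd (v a) (v b) then a else b := by
  have hmem' : ∀ x, x ∈ (Finset.univ.filter fun k => v k ≠ 0) ↔ (x = a ∨ x = b) := by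
    intro x; simp [hmem x]
  have haA : a ∈ (Finset.univ.filter fun k => v k ≠ 0) := (hmem' a).mpr (Or.inl rfl)
  have hbA : b ∈ (Finset.univ.filter fun k => v k ≠ 0) := (hmem' b).mpr (Or.inr rfl)
  have hmin : (Finset.univ.filter fun k => v k ≠ 0).min' hv = a := by
    have h1 := (hmem' _).mp (Finset.min'_mem _ hv)
    have h2 := Finset.min'_le _ a haA
    rcases h1 with h3 | h3
    · exact h3
    · exact absurd h2 (not_le.mpr (h3 ▸ hab))
  have hmax : (Finset.univ.filter fun k => v k ≠ 0).max' hv = b := by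
    have h1 := (hmem' _).mp (Finset.max'_mem _ hv)
    have h2 := Finset.le_max' _ b hbA
    rcases h1 with h3 | h3
    · exact absurd h2 (not_le.mpr (h3 ▸ hab))
    · exact h3
  unfold pick
  rw [hmin, hmax]

/-- The key property of `pick`: for vectors of weight at most `2`, equal picks
force a nonzero inner product. -/
lemma key_lemma {n : ℕ} (v w : EuclideanSpace ℂ (Fin n))
    (hv : (Finset.univ.filter fun k => v k ≠ 0).Nonempty)
    (hw : (Finset.univ.filter fun k => w k ≠ 0).Nonempty)
    (hv2 : (Finset.univ.filter fun k => v k ≠ 0).card ≤ 2)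
    (hw2 : (Finset.univ.filter fun k => w k ≠ 0).card ≤ 2)
    (hp : pick v hv = pick w hw) : (inner ℂ v w : ℂ) ≠ 0 := by
  intro hzero
  have hinner : ∑ k, (starRingEnd ℂ) (v k) * w k = 0 := by
    rw [← hzero]
    simp [PiLp.inner_apply, RCLike.inner_apply, mul_comm]
  have hvc : v (pick v hv) ≠ 0 := pick_ne_zero v hv
  have hwc : w (pick v hv) ≠ 0 := by rw [hp]; exact pick_ne_zero w hw
  by_cases hone : ∀ k, k ≠ pick v hv → (starRingEnd ℂ) (v k) * w k = 0
  · have h5 : ∑ k, (starRingEnd ℂ) (v k) * w k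
        = (starRingEnd ℂ) (v (pick v hv)) * w (pick v hv) :=
      Finset.sum_eq_single (pick v hv) (fun b _ hb => hone b hb)
        (fun h => absurd (Finset.mem_univ _) h)
    rw [hinner] at h5
    exact mul_ne_zero (by simpa using hvc) hwc h5.symm
  · push_neg at hone
    obtain ⟨d, hdc, hd⟩ := hone
    have hvd : v d ≠ 0 := fun h => hd (by simp [h])
    have hwd : w d ≠ 0 := fun h => hd (by simp [h])
    have hsupv : ∀ x, v x ≠ 0 → (x = pick v hv ∨ x = d) := by
      intro x hx
      by_contra hcon
      push_neg at hcon
      have hsub : ({x, pick v hv, d} : Finset (Fin n)) ⊆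
          Finset.univ.filter fun k => v k ≠ 0 := by
        intro y hy
        simp only [Finset.mem_insert, Finset.mem_singleton] at hy
        rcases hy with h | h | h <;> subst h <;> simp [hx, hvc, hvd]
      have hcard : ({x, pick v hv, d} : Finset (Fin n)).card = 3 := by
        rw [Finset.card_insert_of_notMem (by simp [hcon.1, hcon.2]),
          Finset.card_insert_of_notMem (by simpa using hdc.symm),
          Finset.card_singleton]
      have := Finset.card_le_card hsub
      omega
    have hsupw : ∀ x, w x ≠ 0 → (x = pick v hv ∨ x = d) := by
      intro x hx
      by_contra hcon
      push_neg at hcon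
      have hsub : ({x, pick v hv, d} : Finset (Fin n)) ⊆
          Finset.univ.filter fun k => w k ≠ 0 := by
        intro y hy
        simp only [Finset.mem_insert, Finset.mem_singleton] at hy
        rcases hy with h | h | h <;> subst h <;> simp [hx, hwc, hwd]
      have hcard : ({x, pick v hv, d} : Finset (Fin n)).card = 3 := by
        rw [Finset.card_insert_of_notMem (by simp [hcon.1, hcon.2]),
          Finset.card_insert_of_notMem (by simpa using hdc.symm),
          Finset.card_singleton]
      have := Finset.card_le_card hsub
      omega
    obtain ⟨a, b, hab, hor⟩ : ∃ a b : Fin n, a < b ∧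
        ((a = pick v hv ∧ b = d) ∨ (a = d ∧ b = pick v hv)) := by
      rcases lt_or_gt_of_ne hdc with hlt | hlt
      · exact ⟨d, pick v hv, hlt, Or.inr ⟨rfl, rfl⟩⟩
      · exact ⟨pick v hv, d, hlt, Or.inl ⟨rfl, rfl⟩⟩
    have hmemv : ∀ x, v x ≠ 0 ↔ (x = a ∨ x = b) := by
      intro x
      constructor
      · intro hx
        rcases hsupv x hx with h | h <;> rcases hor with ⟨h1, h2⟩ | ⟨h1, h2⟩ <;>
          simp [h, h1, h2]
      · rintro (h | h) <;> subst h <;>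
          rcases hor with ⟨h1, h2⟩ | ⟨h1, h2⟩ <;> subst_vars <;>
          first | exact hvc | exact hvd
    have hmemw : ∀ x, w x ≠ 0 ↔ (x = a ∨ x = b) := by
      intro x
      constructor
      · intro hx
        rcases hsupw x hx with h | h <;> rcases hor with ⟨h1, h2⟩ | ⟨h1, h2⟩ <;>
          simp [h, h1, h2]
      · rintro (h | h) <;> subst h <;>
          rcases hor with ⟨h1, h2⟩ | ⟨h1, h2⟩ <;> subst_vars <;>
          first | exact hwc | exact hwd
    have hva : v a ≠ 0 := (hmemv a).mpr (Or.inl rfl)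
    have hvb : v b ≠ 0 := (hmemv b).mpr (Or.inr rfl)
    have hwa : w a ≠ 0 := (hmemw a).mpr (Or.inl rfl)
    have hwb : w b ≠ 0 := (hmemw b).mpr (Or.inr rfl)
    have hsum : (starRingEnd ℂ) (v a) * w a + (starRingEnd ℂ) (v b) * w b = 0 := by
      classical
      have h1 : ∑ k, (starRingEnd ℂ) (v k) * w k
          = ∑ k ∈ ({a, b} : Finset (Fin n)), (starRingEnd ℂ) (v k) * w k := by
        refine (Finset.sum_subset (Finset.subset_univ _) ?_).symm
        intro x _ hx
        simp only [Finset.mem_insert, Finset.mem_singleton] at hx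
        push_neg at hx
        have : v x = 0 := by
          by_contra hvx
          rcases (hmemv x).mp hvx with h | h
          · exact hx.1 h
          · exact hx.2 h
        simp [this]
      rw [h1, Finset.sum_pair (ne_of_lt hab)] at hinner
      exact hinner
    have hpv := pick_pair v hv a b hab hmemv
    have hpw := pick_pair w hw a b hab hmemw
    have hiff : Cnd (v a) (v b) ↔ Cnd (w a) (w b) := by
      constructor
      · intro h1
        by_contra h2
        rw [hpv, if_pos h1, hpw, if_neg h2] at hp
        exact (ne_of_lt hab) hp
      · intro h1
        by_contra h2
        rw [hpv, if_neg h2, hpw, if_pos h1] at hp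
        exact (ne_of_lt hab) hp.symm
    exact cnd_resolve (v a) (v b) (w a) (w b) hva hvb hwa hwb hsum hiff

lemma supp_nonempty {n : ℕ} (v : EuclideanSpace ℂ (Fin n)) (hv : v ≠ 0) :
    (Finset.univ.filter fun k => v k ≠ 0).Nonempty := by
  by_contra h
  rw [Finset.not_nonempty_iff_eq_empty, Finset.filter_eq_empty_iff] at h
  apply hv
  ext k
  simpa using h (Finset.mem_univ k)

/-- If a quantum Latin square `Ψ` has all entries of weight at most 2, then there is a
classical Latin square `Ψ'` (all entries standard basis vectors) that is orthogonal to
every quantum Latin square that `Ψ` is orthogonal to. -/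
theorem weight_le_two_classical_mate (n : ℕ)
    (Ψ : Fin n → Fin n → EuclideanSpace ℂ (Fin n))
    (hΨ : IsQLS Ψ) (hw : ∀ i j, weight (Ψ i j) ≤ 2) :
    ∃ Ψ' : Fin n → Fin n → EuclideanSpace ℂ (Fin n),
      IsQLS Ψ' ∧
      (∀ i j, ∃ k, Ψ' i j = EuclideanSpace.single k (1 : ℂ)) ∧
      (∀ Φ : Fin n → Fin n → EuclideanSpace ℂ (Fin n),
        IsQLS Φ → OrthQLS Ψ Φ → OrthQLS Ψ' Φ) := by
  classical
  have hne : ∀ i j, Ψ i j ≠ 0 := by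
    intro i j h
    have h1 : ‖Ψ i j‖ = 1 := (hΨ.1 i).1 j
    rw [h] at h1
    simp at h1
  have hsupp : ∀ i j, (Finset.univ.filter fun k => Ψ i j k ≠ 0).Nonempty :=
    fun i j => supp_nonempty _ (hne i j)
  have hcard : ∀ i j, (Finset.univ.filter fun k => Ψ i j k ≠ 0).card ≤ 2 := hw
  -- equal picks force a nonzero inner product
  have hkey : ∀ i j k l, pick (Ψ i j) (hsupp i j) = pick (Ψ k l) (hsupp k l) →
      (inner ℂ (Ψ i j) (Ψ k l) : ℂ) ≠ 0 := by
    intro i j k l hp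
    exact key_lemma _ _ (hsupp i j) (hsupp k l) (hcard i j) (hcard k l) hp
  refine ⟨fun i j => EuclideanSpace.single (pick (Ψ i j) (hsupp i j)) 1,
    ⟨?_, ?_⟩, fun i j => ⟨_, rfl⟩, ?_⟩
  · -- rows orthonormal
    intro i
    rw [orthonormal_iff_ite]
    intro j l
    rw [EuclideanSpace.inner_single_left]
    simp only [EuclideanSpace.single_apply, map_one, one_mul]
    by_cases h : j = l
    · subst h; simp
    · rw [if_neg h, if_neg]
      intro hp
      have h1 := hkey i l i j hp.symm      -- careful: which order
      have h2 : (inner ℂ (Ψ i l) (Ψ i j) : ℂ) = 0 := (hΨ.1 i).2 (Ne.symm h)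
      exact h1 h2
  · -- columns orthonormal
    intro j
    rw [orthonormal_iff_ite]
    intro i l
    rw [EuclideanSpace.inner_single_left]
    simp only [EuclideanSpace.single_apply, map_one, one_mul]
    by_cases h : i = l
    · subst h; simp
    · rw [if_neg h, if_neg]
      intro hp
      have h1 := hkey l j i j hp.symm
      have h2 : (inner ℂ (Ψ l j) (Ψ i j) : ℂ) = 0 := (hΨ.2 j).2 (Ne.symm h)
      exact h1 h2
  · -- orthogonality transfer
    intro Φ hΦ hOrth i j k l hcell
    by_cases hp : pick (Ψ i j) (hsupp i j) = pick (Ψ k l) (hsupp k l)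
    · have h1 := hkey i j k l hp
      have h2 := hOrth i j k l hcell
      rcases mul_eq_zero.mp h2 with h3 | h3
      · exact absurd h3 h1
      · rw [h3, mul_zero]
    · have h3 : (inner ℂ (EuclideanSpace.single (pick (Ψ i j) (hsupp i j)) (1:ℂ))
          (EuclideanSpace.single (pick (Ψ k l) (hsupp k l)) (1:ℂ)) : ℂ) = 0 := by
        rw [EuclideanSpace.inner_single_left]
        simp only [EuclideanSpace.single_apply, map_one, one_mul]
        rw [if_neg]
        intro h
        exact hp h
      rw [h3, zero_mul]
end
end

section
/- Let U be a 6×6 complex unitary matrix such that some row has support of size exactly 4 and no row has support of size 5 or more. Then at least one of the following holds: (i) there is a row r₀ with support of size 4, another row r₁ ≠ r₀ with the same support as r₀, and a further row with support of size 2 contained in the support of r₀; or (ii) there are at least four rows with support of size at least 3. Moreover, in either case, U has at least four rows with support of size at least 2. -/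
open ComplexConjugate

lemma sum_pair_reduce {M : Type*} [AddCommMonoid M] (f : Fin 6 → M) (a b : Fin 6)
    (hab : a ≠ b) (hz : ∀ c, c ≠ a → c ≠ b → f c = 0) :
    ∑ c, f c = f a + f b := by
  rw [← Finset.sum_pair hab]
  refine (Finset.sum_subset (Finset.subset_univ _) ?_).symm
  intro x _ hx
  simp only [Finset.mem_insert, Finset.mem_singleton, not_or] at hx
  exact hz x hx.1 hx.2

lemma sum_single_reduce {M : Type*} [AddCommMonoid M] (f : Fin 6 → M) (a : Fin 6)
    (hz : ∀ c, c ≠ a → f c = 0) :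
    ∑ c, f c = f a := by
  rw [← Finset.sum_singleton f a]
  refine (Finset.sum_subset (Finset.subset_univ _) ?_).symm
  intro x _ hx
  simp only [Finset.mem_singleton] at hx
  exact hz x hx

lemma pair_iff {x y u v : ℂ} (hx : x ≠ 0) (hy : y ≠ 0)
    (h : x * conj u + y * conj v = 0) : (u = 0 ↔ v = 0) := by
  constructor
  · intro hu
    rw [hu, map_zero, mul_zero, zero_add] at h
    rcases mul_eq_zero.mp h with h' | h'
    · exact absurd h' hy
    · simpa using h'
  · intro hv
    rw [hv, map_zero, mul_zero, add_zero] at h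
    rcases mul_eq_zero.mp h with h' | h'
    · exact absurd h' hx
    · simpa using h'

lemma c2lemma {a1 a2 b1 b2 c1 c2 : ℂ}
    (ha : ¬(a1 = 0 ∧ a2 = 0)) (hb : ¬(b1 = 0 ∧ b2 = 0))
    (hab : a1 * conj b1 + a2 * conj b2 = 0)
    (hca : c1 * conj a1 + c2 * conj a2 = 0)
    (hcb : c1 * conj b1 + c2 * conj b2 = 0) : c1 = 0 ∧ c2 = 0 := by
  have hD : a1 * b2 - a2 * b1 ≠ 0 := by
    intro hD
    have h1 : a1 * ((Complex.normSq b1 : ℂ) + (Complex.normSq b2 : ℂ)) = 0 := by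
      rw [← Complex.mul_conj b1, ← Complex.mul_conj b2]
      linear_combination b1 * hab + conj b2 * hD
    have h2 : a2 * ((Complex.normSq b1 : ℂ) + (Complex.normSq b2 : ℂ)) = 0 := by
      rw [← Complex.mul_conj b1, ← Complex.mul_conj b2]
      linear_combination b2 * hab - conj b1 * hD
    have hbn : (Complex.normSq b1 : ℂ) + (Complex.normSq b2 : ℂ) ≠ 0 := by
      rw [← Complex.ofReal_add]
      rw [Ne, Complex.ofReal_eq_zero]
      intro h
      have h1' : Complex.normSq b1 = 0 := by nlinarith [Complex.normSq_nonneg b1, Complex.normSq_nonneg b2]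
      have h2' : Complex.normSq b2 = 0 := by nlinarith [Complex.normSq_nonneg b1, Complex.normSq_nonneg b2]
      exact hb ⟨Complex.normSq_eq_zero.mp h1', Complex.normSq_eq_zero.mp h2'⟩
    exact ha ⟨by rcases mul_eq_zero.mp h1 with h|h; exact h; exact absurd h hbn,
      by rcases mul_eq_zero.mp h2 with h|h; exact h; exact absurd h hbn⟩
  have hDc : conj (a1 * b2 - a2 * b1) ≠ 0 := by
    rw [starRingEnd_apply, Ne, star_eq_zero]; exact hD
  have e1 : c1 * conj (a1 * b2 - a2 * b1) = 0 := by
    rw [map_sub, map_mul, map_mul]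
    linear_combination conj b2 * hca - conj a2 * hcb
  have e2 : c2 * conj (a1 * b2 - a2 * b1) = 0 := by
    rw [map_sub, map_mul, map_mul]
    linear_combination conj a1 * hcb - conj b1 * hca
  constructor
  · rcases mul_eq_zero.mp e1 with h|h; exact h; exact absurd h hDc
  · rcases mul_eq_zero.mp e2 with h|h; exact h; exact absurd h hDc

noncomputable section

/-- The support of the `i`-th row of a matrix: the set of columns with a nonzero entry. -/
def rowSupp (U : Matrix (Fin 6) (Fin 6) ℂ) (i : Fin 6) : Finset (Fin 6) :=
  Finset.univ.filter fun j => U i j ≠ 0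

set_option maxHeartbeats 4000000 in
/-- If a `6 × 6` unitary matrix has a row of weight four and no row of weight five or
more, then either (i) there are two rows of weight four with the same support and a
further row of weight two whose support is contained in it, or (ii) there are at least
four rows of weight at least three. In both cases, there are at least four rows of
weight at least two. -/
theorem unitary_pattern_weight_four (U : Matrix (Fin 6) (Fin 6) ℂ)
    (hU : U ∈ Matrix.unitaryGroup (Fin 6) ℂ)
    (h4 : ∃ r, (rowSupp U r).card = 4)
    (h5 : ∀ r, (rowSupp U r).card ≤ 4) :
    ((∃ r₀ r₁ r₂ : Fin 6, (rowSupp U r₀).card = 4 ∧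
        r₁ ≠ r₀ ∧ rowSupp U r₁ = rowSupp U r₀ ∧
        r₂ ≠ r₀ ∧ r₂ ≠ r₁ ∧ (rowSupp U r₂).card = 2 ∧
        rowSupp U r₂ ⊆ rowSupp U r₀) ∨
      4 ≤ (Finset.univ.filter fun i => 3 ≤ (rowSupp U i).card).card) ∧
    4 ≤ (Finset.univ.filter fun i => 2 ≤ (rowSupp U i).card).card := by
  -- basic unitarity facts
  have hrowU : U * star U = 1 := (Matrix.mem_unitaryGroup_iff).mp hU
  have hcolU : star U * U = 1 := (Matrix.mem_unitaryGroup_iff').mp hU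
  have horth : ∀ i j : Fin 6, i ≠ j → ∑ c, U i c * conj (U j c) = 0 := by
    intro i j hij
    have := congrFun (congrFun hrowU i) j
    simpa [Matrix.mul_apply, Matrix.star_apply, Matrix.one_apply, hij] using this
  have hcol : ∀ a b : Fin 6, a ≠ b → ∑ i, conj (U i a) * U i b = 0 := by
    intro a b hab
    have := congrFun (congrFun hcolU a) b
    simpa [Matrix.mul_apply, Matrix.star_apply, Matrix.one_apply, hab] using this
  have hnorm : ∀ i : Fin 6, ∑ c, U i c * conj (U i c) = 1 := by
    intro i
    have := congrFun (congrFun hrowU i) i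
    simpa [Matrix.mul_apply, Matrix.star_apply, Matrix.one_apply] using this
  have hne : ∀ i : Fin 6, ∃ c, U i c ≠ 0 := by
    intro i
    by_contra h
    push_neg at h
    have := hnorm i
    simp [h] at this
  have hzero : ∀ i c, c ∉ rowSupp U i → U i c = 0 := by
    intro i c hc
    by_contra h
    exact hc (by simp [rowSupp, h])
  have hmem : ∀ i c, U i c ≠ 0 → c ∈ rowSupp U i := by
    intro i c h; simp [rowSupp, h]
  have hne_row : ∀ i j : Fin 6, (rowSupp U i).card ≠ (rowSupp U j).card → i ≠ j := by
    intro i j h hij; exact h (by rw [hij])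
  -- setup
  obtain ⟨r0, hr0⟩ := h4
  set S := rowSupp U r0 with hSdef
  have hTcard : Sᶜ.card = 2 := by
    rw [Finset.card_compl, hr0]; rfl
  obtain ⟨t1, t2, ht12, hT⟩ := Finset.card_eq_two.mp hTcard
  have hnotS : ∀ c, c ∉ S ↔ (c = t1 ∨ c = t2) := by
    intro c
    constructor
    · intro hc
      have : c ∈ Sᶜ := Finset.mem_compl.mpr hc
      rw [hT] at this; simpa using this
    · intro hc
      have : c ∈ Sᶜ := by rw [hT]; simpa using hc
      exact Finset.mem_compl.mp this
  have hr0t1 : U r0 t1 = 0 := hzero _ _ ((hnotS t1).mpr (Or.inl rfl))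
  have hr0t2 : U r0 t2 = 0 := hzero _ _ ((hnotS t2).mpr (Or.inr rfl))
  -- key lemma: rows supported in T = {t1,t2}: zero-forcing
  have keyT : ∀ w1 w2 h : Fin 6, w1 ≠ w2 → h ≠ w1 → h ≠ w2 →
      rowSupp U w1 ⊆ Sᶜ → rowSupp U w2 ⊆ Sᶜ → U h t1 = 0 ∧ U h t2 = 0 := by
    intro w1 w2 h h12 hw1 hw2 hs1 hs2
    have hz1 : ∀ c, c ≠ t1 → c ≠ t2 → U w1 c = 0 := by
      intro c hc1 hc2
      refine hzero _ _ (fun hc => ?_)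
      have := hs1 hc; rw [hT] at this; simp at this; tauto
    have hz2 : ∀ c, c ≠ t1 → c ≠ t2 → U w2 c = 0 := by
      intro c hc1 hc2
      refine hzero _ _ (fun hc => ?_)
      have := hs2 hc; rw [hT] at this; simp at this; tauto
    have hnz1 : ¬(U w1 t1 = 0 ∧ U w1 t2 = 0) := by
      rintro ⟨e1, e2⟩
      obtain ⟨c, hc⟩ := hne w1
      rcases eq_or_ne c t1 with rfl|h1; exact hc e1
      rcases eq_or_ne c t2 with rfl|h2; exact hc e2
      exact hc (hz1 c h1 h2)
    have hnz2 : ¬(U w2 t1 = 0 ∧ U w2 t2 = 0) := by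
      rintro ⟨e1, e2⟩
      obtain ⟨c, hc⟩ := hne w2
      rcases eq_or_ne c t1 with rfl|h1; exact hc e1
      rcases eq_or_ne c t2 with rfl|h2; exact hc e2
      exact hc (hz2 c h1 h2)
    have hab : U w1 t1 * conj (U w2 t1) + U w1 t2 * conj (U w2 t2) = 0 := by
      have := horth w1 w2 h12
      rwa [sum_pair_reduce _ t1 t2 ht12 (fun c h1 h2 => by rw [hz1 c h1 h2, zero_mul])] at this
    have hca : U h t1 * conj (U w1 t1) + U h t2 * conj (U w1 t2) = 0 := by
      have := horth h w1 hw1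
      rwa [sum_pair_reduce _ t1 t2 ht12 (fun c h1 h2 => by rw [hz1 c h1 h2, map_zero, mul_zero])] at this
    have hcb : U h t1 * conj (U w2 t1) + U h t2 * conj (U w2 t2) = 0 := by
      have := horth h w2 hw2
      rwa [sum_pair_reduce _ t1 t2 ht12 (fun c h1 h2 => by rw [hz2 c h1 h2, map_zero, mul_zero])] at this
    exact c2lemma hnz1 hnz2 hab hca hcb
  have key3 : ∀ w1 w2 w3 : Fin 6, w1 ≠ w2 → w3 ≠ w1 → w3 ≠ w2 →
      rowSupp U w1 ⊆ Sᶜ → rowSupp U w2 ⊆ Sᶜ → rowSupp U w3 ⊆ Sᶜ → False := by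
    intro w1 w2 w3 h12 h31 h32 hs1 hs2 hs3
    obtain ⟨e1, e2⟩ := keyT w1 w2 w3 h12 h31 h32 hs1 hs2
    obtain ⟨c, hc⟩ := hne w3
    have := hs3 (hmem _ _ hc)
    rw [hT] at this; simp at this
    rcases this with rfl|rfl
    exact hc e1
    exact hc e2
  -- weight ≤ 1 rows are supported in the complement
  have hw1T : ∀ i, (rowSupp U i).card ≤ 1 → rowSupp U i ⊆ Sᶜ := by
    intro i hcard
    rcases Nat.le_one_iff_eq_zero_or_eq_one.mp hcard with h0 | h1
    · rw [Finset.card_eq_zero.mp h0]; simp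
    · obtain ⟨j, hj⟩ := Finset.card_eq_one.mp h1
      have hir0 : i ≠ r0 := hne_row _ _ (by rw [h1, hr0]; omega)
      have hjmem : j ∈ rowSupp U i := by rw [hj]; simp
      have hij : U i j ≠ 0 := by simpa [rowSupp] using hjmem
      have hz : ∀ c, c ≠ j → U i c = 0 := by
        intro c hc
        refine hzero _ _ (fun hcm => hc ?_)
        rw [hj] at hcm; simpa using hcm
      have horths : U i j * conj (U r0 j) = 0 := by
        have := horth i r0 hir0
        rwa [sum_single_reduce _ j (fun c hc => by rw [hz c hc, zero_mul])] at this
      have hr0j : U r0 j = 0 := by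
        rcases mul_eq_zero.mp horths with h | h
        · exact absurd h hij
        · simpa using h
      have hjS : j ∉ S := by rw [hSdef]; simp [rowSupp, hr0j]
      rw [hj]
      intro c hc
      simp only [Finset.mem_singleton] at hc
      subst hc
      exact Finset.mem_compl.mpr hjS
  have hSmem : ∀ c, c ∈ S ↔ U r0 c ≠ 0 := by
    intro c; rw [hSdef]; simp [rowSupp]
  have hcard6 : (Finset.univ : Finset (Fin 6)).card = 6 := by simp
  -- second conjunct
  have hconj2 : 4 ≤ (Finset.univ.filter fun i => 2 ≤ (rowSupp U i).card).card := by
    by_contra hcon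
    push_neg at hcon
    have hsplit := Finset.card_filter_add_card_filter_not
      (s := (Finset.univ : Finset (Fin 6))) (p := fun i => 2 ≤ (rowSupp U i).card)
    rw [hcard6] at hsplit
    have hlow : 2 < (Finset.univ.filter fun i => ¬ 2 ≤ (rowSupp U i).card).card := by omega
    obtain ⟨a, b, c, hA, hB, hC, hab, hac, hbc⟩ := Finset.two_lt_card_iff.mp hlow
    simp only [Finset.mem_filter, Finset.mem_univ, true_and, not_le] at hA hB hC
    exact key3 a b c hab hac.symm hbc.symm
      (hw1T a (by omega)) (hw1T b (by omega)) (hw1T c (by omega))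
  refine ⟨?_, hconj2⟩
  -- first conjunct
  by_cases hk : 4 ≤ (Finset.univ.filter fun i => 3 ≤ (rowSupp U i).card).card
  · exact Or.inr hk
  left
  -- at least three rows of weight ≤ 2
  have hsplit := Finset.card_filter_add_card_filter_not
    (s := (Finset.univ : Finset (Fin 6))) (p := fun i => 3 ≤ (rowSupp U i).card)
  rw [hcard6] at hsplit
  have hlow3 : 2 < (Finset.univ.filter fun i => ¬ 3 ≤ (rowSupp U i).card).card := by omega
  obtain ⟨i1, i2, i3, hI1, hI2, hI3, hi12, hi13, hi23⟩ := Finset.two_lt_card_iff.mp hlow3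
  simp only [Finset.mem_filter, Finset.mem_univ, true_and, not_le] at hI1 hI2 hI3
  -- dichotomy for weight-2 rows
  have hdich : ∀ i, (rowSupp U i).card = 2 → rowSupp U i ⊆ S ∨ rowSupp U i ⊆ Sᶜ := by
    intro i hc2
    have hir0 : i ≠ r0 := hne_row _ _ (by rw [hc2, hr0]; omega)
    obtain ⟨j, k, hjk, hsupp⟩ := Finset.card_eq_two.mp hc2
    have hz : ∀ c, c ≠ j → c ≠ k → U i c = 0 := by
      intro c h1 h2
      refine hzero _ _ (fun hcm => ?_)
      rw [hsupp] at hcm; simp at hcm; tauto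
    have hUij : U i j ≠ 0 := by
      have : j ∈ rowSupp U i := by rw [hsupp]; simp
      simpa [rowSupp] using this
    have hUik : U i k ≠ 0 := by
      have : k ∈ rowSupp U i := by rw [hsupp]; simp
      simpa [rowSupp] using this
    have horth2 : U i j * conj (U r0 j) + U i k * conj (U r0 k) = 0 := by
      have := horth i r0 hir0
      rwa [sum_pair_reduce _ j k hjk (fun c h1 h2 => by rw [hz c h1 h2, zero_mul])] at this
    have hiff := pair_iff hUij hUik horth2
    by_cases hj0 : U r0 j = 0
    · right
      have hk0 : U r0 k = 0 := hiff.mp hj0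
      rw [hsupp]
      intro c hc; simp at hc
      rcases hc with rfl | rfl
      · exact Finset.mem_compl.mpr (fun h => (hSmem c).mp h hj0)
      · exact Finset.mem_compl.mpr (fun h => (hSmem c).mp h hk0)
    · left
      have hk0 : U r0 k ≠ 0 := fun h => hj0 (hiff.mpr h)
      rw [hsupp]
      intro c hc; simp at hc
      rcases hc with rfl | rfl
      · exact (hSmem c).mpr hj0
      · exact (hSmem c).mpr hk0
  have hlowT : ∀ i, (rowSupp U i).card ≤ 2 →
      ¬((rowSupp U i).card = 2 ∧ rowSupp U i ⊆ S) → rowSupp U i ⊆ Sᶜ := by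
    intro i hc hnot
    rcases Nat.lt_or_ge (rowSupp U i).card 2 with h | h
    · exact hw1T i (by omega)
    · have hc2 : (rowSupp U i).card = 2 := le_antisymm hc h
      rcases hdich i hc2 with hS | hT'
      · exact absurd ⟨hc2, hS⟩ hnot
      · exact hT'
  -- there is a weight-2 row supported in S
  have hSpair : ∃ s1, (rowSupp U s1).card = 2 ∧ rowSupp U s1 ⊆ S := by
    by_contra hno
    push_neg at hno
    exact key3 i1 i2 i3 hi12 hi13.symm hi23.symm
      (hlowT i1 (by omega : (rowSupp U i1).card ≤ 2) (fun ⟨h2, hs⟩ => hno i1 h2 hs))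
      (hlowT i2 (by omega : (rowSupp U i2).card ≤ 2) (fun ⟨h2, hs⟩ => hno i2 h2 hs))
      (hlowT i3 (by omega : (rowSupp U i3).card ≤ 2) (fun ⟨h2, hs⟩ => hno i3 h2 hs))
  obtain ⟨s1, hs1c, hs1S⟩ := hSpair
  obtain ⟨p1, p2, hp12, hP⟩ := Finset.card_eq_two.mp hs1c
  have hs1r0 : s1 ≠ r0 := hne_row _ _ (by rw [hs1c, hr0]; omega)
  have hs1z : ∀ c, c ≠ p1 → c ≠ p2 → U s1 c = 0 := by
    intro c h1 h2
    refine hzero _ _ (fun hcm => ?_)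
    rw [hP] at hcm; simp at hcm; tauto
  have hs1p1 : U s1 p1 ≠ 0 := by
    have : p1 ∈ rowSupp U s1 := by rw [hP]; simp
    simpa [rowSupp] using this
  have hs1p2 : U s1 p2 ≠ 0 := by
    have : p2 ∈ rowSupp U s1 := by rw [hP]; simp
    simpa [rowSupp] using this
  have hp1S : p1 ∈ S := hs1S (by rw [hP]; simp)
  have hp2S : p2 ∈ S := hs1S (by rw [hP]; simp)
  have hr0p1 : U r0 p1 ≠ 0 := (hSmem p1).mp hp1S
  have hr0p2 : U r0 p2 ≠ 0 := (hSmem p2).mp hp2S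
  have hPsubS : ({p1, p2} : Finset (Fin 6)) ⊆ S := by rw [← hP]; exact hs1S
  have hQcard : (S \ {p1, p2}).card = 2 := by
    rw [Finset.card_sdiff_of_subset hPsubS, Finset.card_pair hp12, hr0]
  obtain ⟨q1, q2, hq12, hQ⟩ := Finset.card_eq_two.mp hQcard
  have hq1m : q1 ∈ S \ ({p1, p2} : Finset (Fin 6)) := by rw [hQ]; simp
  have hq2m : q2 ∈ S \ ({p1, p2} : Finset (Fin 6)) := by rw [hQ]; simp
  rw [Finset.mem_sdiff] at hq1m hq2m
  have hq1S := hq1m.1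
  have hq2S := hq2m.1
  have hq1p1 : q1 ≠ p1 := by intro h; apply hq1m.2; simp [h]
  have hq1p2 : q1 ≠ p2 := by intro h; apply hq1m.2; simp [h]
  have hq2p1 : q2 ≠ p1 := by intro h; apply hq2m.2; simp [h]
  have hq2p2 : q2 ≠ p2 := by intro h; apply hq2m.2; simp [h]
  have hr0q1 : U r0 q1 ≠ 0 := (hSmem q1).mp hq1S
  have hr0q2 : U r0 q2 ≠ 0 := (hSmem q2).mp hq2S
  have hs1q1 : U s1 q1 = 0 := hs1z q1 hq1p1 hq1p2
  have hs1q2 : U s1 q2 = 0 := hs1z q2 hq2p1 hq2p2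
  have huniv : ∀ c : Fin 6, c = p1 ∨ c = p2 ∨ c = q1 ∨ c = q2 ∨ c = t1 ∨ c = t2 := by
    intro c
    by_cases hc : c ∈ S
    · by_cases h1 : c = p1
      · exact Or.inl h1
      by_cases h2 : c = p2
      · exact Or.inr (Or.inl h2)
      have : c ∈ S \ ({p1, p2} : Finset (Fin 6)) := by
        rw [Finset.mem_sdiff]; exact ⟨hc, by simp [h1, h2]⟩
      rw [hQ] at this; simp at this
      tauto
    · have := (hnotS c).mp hc; tauto
  have hpairP : ∀ h, h ≠ s1 → (U h p1 = 0 ↔ U h p2 = 0) := by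
    intro h hh
    have horth2 : U s1 p1 * conj (U h p1) + U s1 p2 * conj (U h p2) = 0 := by
      have := horth s1 h (Ne.symm hh)
      rwa [sum_pair_reduce _ p1 p2 hp12 (fun c h1 h2 => by rw [hs1z c h1 h2, zero_mul])] at this
    exact pair_iff hs1p1 hs1p2 horth2
  have hs1Pnz : ¬(U s1 p1 = 0 ∧ U s1 p2 = 0) := fun ⟨h1, _⟩ => hs1p1 h1
  have hr0Pnz : ¬(U r0 p1 = 0 ∧ U r0 p2 = 0) := fun ⟨h1, _⟩ => hr0p1 h1
  have habP : U s1 p1 * conj (U r0 p1) + U s1 p2 * conj (U r0 p2) = 0 := by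
    have := horth s1 r0 hs1r0
    rwa [sum_pair_reduce _ p1 p2 hp12 (fun c h1 h2 => by rw [hs1z c h1 h2, zero_mul])] at this
  have hKL : ∀ h, h ≠ r0 → h ≠ s1 → U h q1 = 0 → U h q2 = 0 →
      U h p1 = 0 ∧ U h p2 = 0 := by
    intro h hhr0 hhs1 hq1' hq2'
    have hca : U h p1 * conj (U s1 p1) + U h p2 * conj (U s1 p2) = 0 := by
      have := horth h s1 hhs1
      rwa [sum_pair_reduce _ p1 p2 hp12
        (fun c h1 h2 => by rw [hs1z c h1 h2, map_zero, mul_zero])] at this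
    have hcb : U h p1 * conj (U r0 p1) + U h p2 * conj (U r0 p2) = 0 := by
      have := horth h r0 hhr0
      rwa [sum_pair_reduce _ p1 p2 hp12 (fun c h1 h2 => ?_)] at this
      rcases huniv c with rfl|rfl|rfl|rfl|rfl|rfl
      · exact absurd rfl h1
      · exact absurd rfl h2
      · rw [hq1', zero_mul]
      · rw [hq2', zero_mul]
      · rw [hr0t1, map_zero, mul_zero]
      · rw [hr0t2, map_zero, mul_zero]
    exact c2lemma hs1Pnz hr0Pnz habP hca hcb
  by_cases hs2ex : ∃ s2, s2 ≠ s1 ∧ (rowSupp U s2).card = 2 ∧ rowSupp U s2 ⊆ S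
  · -- Branch A
    obtain ⟨s2, hs21, hs2c, hs2S⟩ := hs2ex
    have hs2r0 : s2 ≠ r0 := hne_row _ _ (by rw [hs2c, hr0]; omega)
    have hs2p1 : U s2 p1 = 0 := by
      by_contra hnz
      have hp2nz : U s2 p2 ≠ 0 := fun h => hnz ((hpairP s2 hs21).mpr h)
      have hsub : ({p1, p2} : Finset (Fin 6)) ⊆ rowSupp U s2 := by
        intro c hc; simp at hc
        rcases hc with rfl | rfl
        · exact hmem _ _ hnz
        · exact hmem _ _ hp2nz
      have hsupp : ({p1, p2} : Finset (Fin 6)) = rowSupp U s2 :=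
        Finset.eq_of_subset_of_card_le hsub (by rw [hs2c, Finset.card_pair hp12])
      have hs2z : ∀ c, c ≠ p1 → c ≠ p2 → U s2 c = 0 := by
        intro c h1 h2
        refine hzero _ _ (fun hcm => ?_)
        rw [← hsupp] at hcm; simp at hcm; tauto
      have hs2Pnz : ¬(U s2 p1 = 0 ∧ U s2 p2 = 0) := fun ⟨h, _⟩ => hnz h
      have hab : U s1 p1 * conj (U s2 p1) + U s1 p2 * conj (U s2 p2) = 0 := by
        have := horth s1 s2 (Ne.symm hs21)
        rwa [sum_pair_reduce _ p1 p2 hp12 (fun c h1 h2 => by rw [hs1z c h1 h2, zero_mul])] at this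
      have hca : U r0 p1 * conj (U s1 p1) + U r0 p2 * conj (U s1 p2) = 0 := by
        have := horth r0 s1 (Ne.symm hs1r0)
        rwa [sum_pair_reduce _ p1 p2 hp12
          (fun c h1 h2 => by rw [hs1z c h1 h2, map_zero, mul_zero])] at this
      have hcb : U r0 p1 * conj (U s2 p1) + U r0 p2 * conj (U s2 p2) = 0 := by
        have := horth r0 s2 (Ne.symm hs2r0)
        rwa [sum_pair_reduce _ p1 p2 hp12
          (fun c h1 h2 => by rw [hs2z c h1 h2, map_zero, mul_zero])] at this
      exact hr0p1 (c2lemma hs1Pnz hs2Pnz hab hca hcb).1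
    have hs2p2 : U s2 p2 = 0 := (hpairP s2 hs21).mp hs2p1
    have hs2sub : rowSupp U s2 ⊆ {q1, q2} := by
      intro c hc
      have hcnz : U s2 c ≠ 0 := by simpa [rowSupp] using hc
      have hcS : c ∈ S := hs2S hc
      rcases huniv c with rfl|rfl|rfl|rfl|rfl|rfl
      · exact absurd hs2p1 hcnz
      · exact absurd hs2p2 hcnz
      · simp
      · simp
      · exact absurd hcS ((hnotS _).mpr (Or.inl rfl))
      · exact absurd hcS ((hnotS _).mpr (Or.inr rfl))
    have hs2supp : rowSupp U s2 = {q1, q2} :=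
      Finset.eq_of_subset_of_card_le hs2sub (by rw [hs2c, Finset.card_pair hq12])
    have hs2q1 : U s2 q1 ≠ 0 := by
      have : q1 ∈ rowSupp U s2 := by rw [hs2supp]; simp
      simpa [rowSupp] using this
    have hs2q2 : U s2 q2 ≠ 0 := by
      have : q2 ∈ rowSupp U s2 := by rw [hs2supp]; simp
      simpa [rowSupp] using this
    have hs2z : ∀ c, c ≠ q1 → c ≠ q2 → U s2 c = 0 := by
      intro c h1 h2
      refine hzero _ _ (fun hcm => ?_)
      rw [hs2supp] at hcm; simp at hcm; tauto
    have hpairQ : ∀ h, h ≠ s2 → (U h q1 = 0 ↔ U h q2 = 0) := by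
      intro h hh
      have horth2 : U s2 q1 * conj (U h q1) + U s2 q2 * conj (U h q2) = 0 := by
        have := horth s2 h (Ne.symm hh)
        rwa [sum_pair_reduce _ q1 q2 hq12 (fun c h1 h2 => by rw [hs2z c h1 h2, zero_mul])] at this
      exact pair_iff hs2q1 hs2q2 horth2
    by_cases hex : ∃ h, h ≠ r0 ∧ h ≠ s1 ∧ h ≠ s2 ∧ rowSupp U h = S
    · obtain ⟨h, h1, h2, h3, hsupp⟩ := hex
      have hs1h : s1 ≠ h := hne_row _ _ (by rw [hs1c, hsupp, hr0]; omega)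
      refine ⟨r0, h, s1, by rw [← hSdef]; exact hr0, h1, by rw [← hSdef]; exact hsupp,
        hs1r0, hs1h, hs1c, by rw [← hSdef]; exact hs1S⟩
    · push_neg at hex
      have hallz : ∀ h, h ≠ r0 → h ≠ s1 → h ≠ s2 → U h p1 = 0 := by
        intro h h1 h2 h3
        by_contra hnz
        have hp2nz : U h p2 ≠ 0 := fun e => hnz ((hpairP h h2).mpr e)
        by_cases hq : U h q1 = 0
        · exact hnz (hKL h h1 h2 hq ((hpairQ h h3).mp hq)).1
        · have hq2nz : U h q2 ≠ 0 := fun e => hq ((hpairQ h h3).mpr e)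
          apply hex h h1 h2 h3
          have hsub : S ⊆ rowSupp U h := by
            intro c hc
            rcases huniv c with rfl|rfl|rfl|rfl|rfl|rfl
            · exact hmem _ _ hnz
            · exact hmem _ _ hp2nz
            · exact hmem _ _ hq
            · exact hmem _ _ hq2nz
            · exact absurd hc ((hnotS _).mpr (Or.inl rfl))
            · exact absurd hc ((hnotS _).mpr (Or.inr rfl))
          exact (Finset.eq_of_subset_of_card_le hsub ((h5 h).trans_eq hr0.symm)).symm
      have hcolpq := hcol p1 q1 (Ne.symm hq1p1)
      rw [sum_single_reduce _ r0 (fun i hi => ?_)] at hcolpq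
      · rcases mul_eq_zero.mp hcolpq with h | h
        · rw [starRingEnd_apply, star_eq_zero] at h; exact absurd h hr0p1
        · exact absurd h hr0q1
      · by_cases h1 : i = s1
        · subst h1; rw [hs1q1, mul_zero]
        · by_cases h2 : i = s2
          · subst h2; rw [hs2p1, map_zero, zero_mul]
          · rw [hallz i hi h1 h2, map_zero, zero_mul]
  · -- Branch B : no second weight-2 row inside S
    push_neg at hs2ex
    have hzS : ∀ w, rowSupp U w ⊆ Sᶜ → ∀ c, c ∈ S → U w c = 0 := by
      intro w hw c hc
      by_contra h
      exact (Finset.mem_compl.mp (hw (hmem _ _ h))) hc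
    -- two low rows different from s1
    have hwex : ∃ w1 w2, w1 ≠ w2 ∧ w1 ≠ s1 ∧ w2 ≠ s1 ∧
        (rowSupp U w1).card ≤ 2 ∧ (rowSupp U w2).card ≤ 2 := by
      by_cases h1 : i1 = s1
      · exact ⟨i2, i3, hi23, by rw [← h1]; exact Ne.symm hi12, by rw [← h1]; exact Ne.symm hi13,
          by omega, by omega⟩
      by_cases h2 : i2 = s1
      · exact ⟨i1, i3, hi13, h1, by rw [← h2]; exact Ne.symm hi23, by omega, by omega⟩
      · exact ⟨i1, i2, hi12, h1, h2, by omega, by omega⟩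
    obtain ⟨w1, w2, hw12, hw1s1, hw2s1, hw1c, hw2c⟩ := hwex
    have hwT : ∀ w, w ≠ s1 → (rowSupp U w).card ≤ 2 → rowSupp U w ⊆ Sᶜ := by
      intro w hws hwc
      exact hlowT w hwc (fun ⟨hc2, hs⟩ => hs2ex w hws hc2 hs)
    have hw1T := hwT w1 hw1s1 hw1c
    have hw2T := hwT w2 hw2s1 hw2c
    have hw1r0 : w1 ≠ r0 := hne_row _ _ (by rw [← hSdef, hr0]; omega)
    have hw2r0 : w2 ≠ r0 := hne_row _ _ (by rw [← hSdef, hr0]; omega)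
    -- the two remaining rows
    have hr0nm : r0 ∉ ({s1, w1, w2} : Finset (Fin 6)) := by
      simp only [Finset.mem_insert, Finset.mem_singleton]
      push_neg
      exact ⟨Ne.symm hs1r0, Ne.symm hw1r0, Ne.symm hw2r0⟩
    have hs1nm : s1 ∉ ({w1, w2} : Finset (Fin 6)) := by
      simp only [Finset.mem_insert, Finset.mem_singleton]
      push_neg
      exact ⟨Ne.symm hw1s1, Ne.symm hw2s1⟩
    have hw1nm : w1 ∉ ({w2} : Finset (Fin 6)) := by simpa using hw12
    have hset4 : ({r0, s1, w1, w2} : Finset (Fin 6)).card = 4 := by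
      rw [Finset.card_insert_of_notMem hr0nm, Finset.card_insert_of_notMem hs1nm,
        Finset.card_insert_of_notMem hw1nm, Finset.card_singleton]
    have hsd : (Finset.univ \ ({r0, s1, w1, w2} : Finset (Fin 6))).card = 2 := by
      rw [Finset.card_sdiff_of_subset (Finset.subset_univ _), hcard6, hset4]
    obtain ⟨h1, h2, hh12, hHD⟩ := Finset.card_eq_two.mp hsd
    have hh1m : h1 ∈ Finset.univ \ ({r0, s1, w1, w2} : Finset (Fin 6)) := by rw [hHD]; simp
    have hh2m : h2 ∈ Finset.univ \ ({r0, s1, w1, w2} : Finset (Fin 6)) := by rw [hHD]; simp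
    rw [Finset.mem_sdiff] at hh1m hh2m
    have hh1d : h1 ≠ r0 ∧ h1 ≠ s1 ∧ h1 ≠ w1 ∧ h1 ≠ w2 := by
      have h' := hh1m.2
      simp only [Finset.mem_insert, Finset.mem_singleton] at h'
      push_neg at h'
      exact h'
    have hh2d : h2 ≠ r0 ∧ h2 ≠ s1 ∧ h2 ≠ w1 ∧ h2 ≠ w2 := by
      have h' := hh2m.2
      simp only [Finset.mem_insert, Finset.mem_singleton] at h'
      push_neg at h'
      exact h'
    have henum : ∀ i : Fin 6, i = r0 ∨ i = s1 ∨ i = w1 ∨ i = w2 ∨ i = h1 ∨ i = h2 := by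
      intro i
      by_cases hi : i ∈ ({r0, s1, w1, w2} : Finset (Fin 6))
      · simp only [Finset.mem_insert, Finset.mem_singleton] at hi
        rcases hi with h'|h'|h'|h'
        · exact Or.inl h'
        · exact Or.inr (Or.inl h')
        · exact Or.inr (Or.inr (Or.inl h'))
        · exact Or.inr (Or.inr (Or.inr (Or.inl h')))
      · have h' : i ∈ Finset.univ \ ({r0, s1, w1, w2} : Finset (Fin 6)) :=
          Finset.mem_sdiff.mpr ⟨Finset.mem_univ _, hi⟩
        rw [hHD] at h'
        simp only [Finset.mem_insert, Finset.mem_singleton] at h'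
        rcases h' with h'|h'
        · exact Or.inr (Or.inr (Or.inr (Or.inr (Or.inl h'))))
        · exact Or.inr (Or.inr (Or.inr (Or.inr (Or.inr h'))))
    obtain ⟨hh1t1, hh1t2⟩ := keyT w1 w2 h1 hw12 hh1d.2.2.1 hh1d.2.2.2 hw1T hw2T
    obtain ⟨hh2t1, hh2t2⟩ := keyT w1 w2 h2 hw12 hh2d.2.2.1 hh2d.2.2.2 hw1T hw2T
    -- per-row trichotomy
    have hHcase : ∀ h, h ≠ r0 → h ≠ s1 → U h t1 = 0 → U h t2 = 0 →
        (rowSupp U h = S) ∨ (U h p1 ≠ 0 ∧ U h p2 ≠ 0 ∧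
          ((U h q1 ≠ 0 ∧ U h q2 = 0) ∨ (U h q1 = 0 ∧ U h q2 ≠ 0))) := by
      intro h hhr0 hhs1 ht1' ht2'
      by_cases hp : U h p1 = 0
      · exfalso
        have hp2' : U h p2 = 0 := (hpairP h hhs1).mp hp
        by_cases hq1' : U h q1 = 0
        · by_cases hq2' : U h q2 = 0
          · obtain ⟨c, hc⟩ := hne h
            rcases huniv c with rfl|rfl|rfl|rfl|rfl|rfl
            · exact hc hp
            · exact hc hp2'
            · exact hc hq1'
            · exact hc hq2'
            · exact hc ht1'
            · exact hc ht2'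
          · have hz : ∀ c, c ≠ q2 → U h c = 0 := by
              intro c hcq
              rcases huniv c with rfl|rfl|rfl|rfl|rfl|rfl
              · exact hp
              · exact hp2'
              · exact hq1'
              · exact absurd rfl hcq
              · exact ht1'
              · exact ht2'
            have := horth h r0 hhr0
            rw [sum_single_reduce _ q2 (fun c hc => by rw [hz c hc, zero_mul])] at this
            rcases mul_eq_zero.mp this with h' | h'
            · exact hq2' h'
            · rw [starRingEnd_apply, star_eq_zero] at h'; exact hr0q2 h'
        · by_cases hq2' : U h q2 = 0
          · have hz : ∀ c, c ≠ q1 → U h c = 0 := by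
              intro c hcq
              rcases huniv c with rfl|rfl|rfl|rfl|rfl|rfl
              · exact hp
              · exact hp2'
              · exact absurd rfl hcq
              · exact hq2'
              · exact ht1'
              · exact ht2'
            have := horth h r0 hhr0
            rw [sum_single_reduce _ q1 (fun c hc => by rw [hz c hc, zero_mul])] at this
            rcases mul_eq_zero.mp this with h' | h'
            · exact hq1' h'
            · rw [starRingEnd_apply, star_eq_zero] at h'; exact hr0q1 h'
          · -- weight-2 row supported in S : contradiction with branch hypothesis
            have heq : rowSupp U h = {q1, q2} := by
              apply Finset.Subset.antisymm
              · intro c hc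
                have hcnz : U h c ≠ 0 := by simpa [rowSupp] using hc
                rcases huniv c with rfl|rfl|rfl|rfl|rfl|rfl
                · exact absurd hp hcnz
                · exact absurd hp2' hcnz
                · simp
                · simp
                · exact absurd ht1' hcnz
                · exact absurd ht2' hcnz
              · intro c hc
                simp only [Finset.mem_insert, Finset.mem_singleton] at hc
                rcases hc with rfl | rfl
                · exact hmem _ _ hq1'
                · exact hmem _ _ hq2'
            have hcard2 : (rowSupp U h).card = 2 := by rw [heq, Finset.card_pair hq12]
            have hsubS : rowSupp U h ⊆ S := by
              rw [heq]
              intro c hc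
              simp only [Finset.mem_insert, Finset.mem_singleton] at hc
              rcases hc with rfl | rfl
              · exact hq1S
              · exact hq2S
            exact hs2ex h hhs1 hcard2 hsubS
      · have hp2' : U h p2 ≠ 0 := fun e => hp ((hpairP h hhs1).mpr e)
        by_cases hq1' : U h q1 = 0
        · by_cases hq2' : U h q2 = 0
          · exact absurd (hKL h hhr0 hhs1 hq1' hq2').1 hp
          · exact Or.inr ⟨hp, hp2', Or.inr ⟨hq1', hq2'⟩⟩
        · by_cases hq2' : U h q2 = 0
          · exact Or.inr ⟨hp, hp2', Or.inl ⟨hq1', hq2'⟩⟩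
          · left
            have hsub : S ⊆ rowSupp U h := by
              intro c hc
              rcases huniv c with rfl|rfl|rfl|rfl|rfl|rfl
              · exact hmem _ _ hp
              · exact hmem _ _ hp2'
              · exact hmem _ _ hq1'
              · exact hmem _ _ hq2'
              · exact absurd hc ((hnotS _).mpr (Or.inl rfl))
              · exact absurd hc ((hnotS _).mpr (Or.inr rfl))
            exact (Finset.eq_of_subset_of_card_le hsub ((h5 h).trans_eq hr0.symm)).symm
    rcases hHcase h1 hh1d.1 hh1d.2.1 hh1t1 hh1t2 with hS1 | ⟨hA11, hA12, hq1st⟩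
    · exact ⟨r0, h1, s1, by rw [← hSdef]; exact hr0, hh1d.1, by rw [← hSdef]; exact hS1,
        hs1r0, hne_row _ _ (by rw [hs1c, hS1, hr0]; omega), hs1c, by rw [← hSdef]; exact hs1S⟩
    rcases hHcase h2 hh2d.1 hh2d.2.1 hh2t1 hh2t2 with hS2 | ⟨hA21, hA22, hq2st⟩
    · exact ⟨r0, h2, s1, by rw [← hSdef]; exact hr0, hh2d.1, by rw [← hSdef]; exact hS2,
        hs1r0, hne_row _ _ (by rw [hs1c, hS2, hr0]; omega), hs1c, by rw [← hSdef]; exact hs1S⟩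
    -- both h1, h2 in the mixed state: derive a contradiction
    exfalso
    have hcolarg : ∀ q, q = q1 ∨ q = q2 → q ≠ p1 → U s1 q = 0 →
        U h1 q = 0 → U h2 q = 0 → False := by
      intro q hqm hqp1 hs1q hh1q hh2q
      have hcolpq := hcol q p1 hqp1
      rw [sum_single_reduce _ r0 (fun i hi => ?_)] at hcolpq
      · rcases mul_eq_zero.mp hcolpq with h' | h'
        · rw [starRingEnd_apply, star_eq_zero] at h'
          rcases hqm with rfl | rfl
          · exact hr0q1 h'
          · exact hr0q2 h'
        · exact hr0p1 h'
      · have hqS : q ∈ S := by rcases hqm with rfl | rfl; exact hq1S; exact hq2S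
        rcases henum i with h'|h'|h'|h'|h'|h'
        · exact absurd h' hi
        · rw [h', hs1q, map_zero, zero_mul]
        · rw [h', hzS w1 hw1T q hqS, map_zero, zero_mul]
        · rw [h', hzS w2 hw2T q hqS, map_zero, zero_mul]
        · rw [h', hh1q, map_zero, zero_mul]
        · rw [h', hh2q, map_zero, zero_mul]
    rcases hq1st with ⟨ha, hb⟩ | ⟨ha, hb⟩ <;> rcases hq2st with ⟨hc', hd⟩ | ⟨hc', hd⟩
    · -- both active at q1, zero at q2
      exact hcolarg q2 (Or.inr rfl) hq2p1 hs1q2 hb hd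
    · -- h1 active q1, h2 active q2 : mixed
      have hb1 : ¬(U h1 p1 = 0 ∧ U h1 p2 = 0) := fun ⟨e, _⟩ => hA11 e
      have hab : U s1 p1 * conj (U h1 p1) + U s1 p2 * conj (U h1 p2) = 0 := by
        have := horth s1 h1 (Ne.symm hh1d.2.1)
        rwa [sum_pair_reduce _ p1 p2 hp12 (fun c e1 e2 => by rw [hs1z c e1 e2, zero_mul])] at this
      have hca : U h2 p1 * conj (U s1 p1) + U h2 p2 * conj (U s1 p2) = 0 := by
        have := horth h2 s1 hh2d.2.1
        rwa [sum_pair_reduce _ p1 p2 hp12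
          (fun c e1 e2 => by rw [hs1z c e1 e2, map_zero, mul_zero])] at this
      have hcb : U h2 p1 * conj (U h1 p1) + U h2 p2 * conj (U h1 p2) = 0 := by
        have := horth h2 h1 (Ne.symm hh12)
        rwa [sum_pair_reduce _ p1 p2 hp12 (fun c e1 e2 => ?_)] at this
        rcases huniv c with rfl|rfl|rfl|rfl|rfl|rfl
        · exact absurd rfl e1
        · exact absurd rfl e2
        · rw [hc', zero_mul]
        · rw [hb, map_zero, mul_zero]
        · rw [hh2t1, zero_mul]
        · rw [hh2t2, zero_mul]
      exact hA21 (c2lemma hs1Pnz hb1 hab hca hcb).1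
    · -- h1 active q2, h2 active q1 : mixed
      have hb1 : ¬(U h1 p1 = 0 ∧ U h1 p2 = 0) := fun ⟨e, _⟩ => hA11 e
      have hab : U s1 p1 * conj (U h1 p1) + U s1 p2 * conj (U h1 p2) = 0 := by
        have := horth s1 h1 (Ne.symm hh1d.2.1)
        rwa [sum_pair_reduce _ p1 p2 hp12 (fun c e1 e2 => by rw [hs1z c e1 e2, zero_mul])] at this
      have hca : U h2 p1 * conj (U s1 p1) + U h2 p2 * conj (U s1 p2) = 0 := by
        have := horth h2 s1 hh2d.2.1
        rwa [sum_pair_reduce _ p1 p2 hp12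
          (fun c e1 e2 => by rw [hs1z c e1 e2, map_zero, mul_zero])] at this
      have hcb : U h2 p1 * conj (U h1 p1) + U h2 p2 * conj (U h1 p2) = 0 := by
        have := horth h2 h1 (Ne.symm hh12)
        rwa [sum_pair_reduce _ p1 p2 hp12 (fun c e1 e2 => ?_)] at this
        rcases huniv c with rfl|rfl|rfl|rfl|rfl|rfl
        · exact absurd rfl e1
        · exact absurd rfl e2
        · rw [ha, map_zero, mul_zero]
        · rw [hd, zero_mul]
        · rw [hh2t1, zero_mul]
        · rw [hh2t2, zero_mul]
      exact hA21 (c2lemma hs1Pnz hb1 hab hca hcb).1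
    · -- both active at q2, zero at q1
      exact hcolarg q1 (Or.inl rfl) hq1p1 hs1q1 ha hc'
end
end

section
/- Let Ψ and Φ be orthogonal quantum Latin squares of order 6 in standard form. If some entry Ψ_{ij} of Ψ has weight 4, then every entry Φ_{kj} of Φ in the same column j has weight 1 (i.e., is a unit scalar multiple of a standard basis vector). -/
noncomputable section

/-- A quantum Latin square of order 6 is in standard form if its first row is
`(e₁, …, e₆)`, the standard basis vectors in order. -/
def StdForm (Ψ : Fin 6 → Fin 6 → EuclideanSpace ℂ (Fin 6)) : Prop :=
  ∀ j, Ψ 0 j = EuclideanSpace.single j (1 : ℂ)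


open Finset

local notation "conj'" => (starRingEnd ℂ)

private lemma conj_eq_zero {x : ℂ} (h : conj' x = 0) : x = 0 := by
  simpa [star_eq_zero] using h

private lemma pos_comb {p q : ℂ} (hp : p ≠ 0) : p * conj' p + q * conj' q ≠ 0 := by
  rw [Complex.mul_conj, Complex.mul_conj, ← Complex.ofReal_add]
  have h1 : 0 < Complex.normSq p := Complex.normSq_pos.mpr hp
  have h2 : 0 ≤ Complex.normSq q := Complex.normSq_nonneg q
  exact_mod_cast (by linarith : (0:ℝ) < Complex.normSq p + Complex.normSq q).ne'

private lemma L_pair {p q x1 x2 y1 y2 : ℂ} (hp : p ≠ 0) (hq : q ≠ 0)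
    (hx : p * x1 + q * x2 = 0) (hy : p * y1 + q * y2 = 0)
    (hxy : conj' x1 * y1 + conj' x2 * y2 = 0)
    (hxx : conj' x1 * x1 + conj' x2 * x2 = 1)
    (hyy : conj' y1 * y1 + conj' y2 * y2 = 1) : False := by
  have hcx : conj' p * conj' x1 + conj' q * conj' x2 = 0 := by
    have := congrArg conj' hx
    simpa [map_add, map_mul] using this
  have key : (p * conj' p + q * conj' q) * (conj' x2 * y2) = 0 := by
    linear_combination (p * conj' p) * hxy - (p * y1) * hcx + (conj' q * conj' x2) * hy
  have h2 : conj' x2 * y2 = 0 := (mul_eq_zero.mp key).resolve_left (pos_comb hp)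
  rcases mul_eq_zero.mp h2 with h | h
  · have hx2 : x2 = 0 := conj_eq_zero h
    have hx1 : x1 = 0 := by
      have : p * x1 = 0 := by rw [hx2] at hx; linear_combination hx
      exact (mul_eq_zero.mp this).resolve_left hp
    rw [hx1, hx2] at hxx; simp at hxx
  · have hy1 : y1 = 0 := by
      have : p * y1 = 0 := by rw [h] at hy; linear_combination hy
      exact (mul_eq_zero.mp this).resolve_left hp
    rw [hy1, h] at hyy; simp at hyy

private lemma L_det {α β α' β' N : ℂ}
    (horth : conj' α * α' + conj' β * β' * N = 0)
    (h1 : conj' α * α + conj' β * β * N = 1)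
    (h2 : conj' α' * α' + conj' β' * β' * N = 1) :
    α * β' - α' * β ≠ 0 := by
  intro hD
  have hD' : α * β' = α' * β := by linear_combination hD
  rcases eq_or_ne α 0 with h0 | h0
  · have hβ : β ≠ 0 := by
      intro hb; rw [h0, hb] at h1; simp at h1
    have hN : N ≠ 0 := by
      intro hN; rw [hN, h0] at h1; simp at h1
    have hα' : α' = 0 := by
      have : α' * β = 0 := by rw [← hD', h0]; ring
      rcases mul_eq_zero.mp this with h | h
      · exact h
      · exact absurd h hβ
    have hβ' : β' = 0 := by
      have hh : conj' β * β' * N = 0 := by rw [h0, hα'] at horth; linear_combination horth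
      rcases mul_eq_zero.mp hh with h | h
      · rcases mul_eq_zero.mp h with h' | h'
        · exact absurd (conj_eq_zero h') hβ
        · exact h'
      · exact absurd h hN
    rw [hα', hβ'] at h2; simp at h2
  · have hα' : α' = 0 := by
      have key : α' = 0 := by
        have e : α * (conj' α * α' + conj' β * β' * N) = α' * (conj' α * α + conj' β * β * N) := by
          linear_combination (conj' β * N) * hD'
        rw [horth, h1] at e
        simpa using e.symm
      exact key
    have hβ' : β' = 0 := by
      have : α * β' = 0 := by rw [hD', hα']; ring
      exact (mul_eq_zero.mp this).resolve_left h0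
    rw [hα', hβ'] at h2; simp at h2

private lemma L_elim {α β α' β' xt y : ℂ} (hdet : α * β' - α' * β ≠ 0)
    (e1 : conj' α * xt + conj' β * y = 0) (e2 : conj' α' * xt + conj' β' * y = 0) :
    xt = 0 ∧ y = 0 := by
  have hcd : conj' (α * β' - α' * β) ≠ 0 := fun h => hdet (conj_eq_zero h)
  have hxt : conj' (α * β' - α' * β) * xt = 0 := by
    simp only [map_sub, map_mul]
    linear_combination conj' β' * e1 - conj' β * e2
  have hy : conj' (α * β' - α' * β) * y = 0 := by
    simp only [map_sub, map_mul]
    linear_combination conj' α * e2 - conj' α' * e1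
  exact ⟨(mul_eq_zero.mp hxt).resolve_left hcd, (mul_eq_zero.mp hy).resolve_left hcd⟩

private lemma L_three {x1 x2 y1 y2 z1 z2 : ℂ}
    (hxy : conj' x1 * y1 + conj' x2 * y2 = 0)
    (hxz : conj' x1 * z1 + conj' x2 * z2 = 0)
    (hyz : conj' y1 * z1 + conj' y2 * z2 = 0)
    (hxx : conj' x1 * x1 + conj' x2 * x2 = 1)
    (hyy : conj' y1 * y1 + conj' y2 * y2 = 1)
    (hzz : conj' z1 * z1 + conj' z2 * z2 = 1) : False := by
  have hD : x1 * y2 - y1 * x2 ≠ 0 := L_det (N := 1) (by linear_combination hxy)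
    (by linear_combination hxx) (by linear_combination hyy)
  obtain ⟨hz1, hz2⟩ := L_elim hD hxz hyz
  rw [hz1, hz2] at hzz; simp at hzz

private lemma rel_pair {uc ud v1c v1d xc xd : ℂ}
    (h1 : conj' uc * v1c + conj' ud * v1d = 0) (hv1d : v1d ≠ 0)
    (horth : conj' v1c * xc + conj' v1d * xd = 0) : ud * xc = uc * xd := by
  have h1' : uc * conj' v1c + ud * conj' v1d = 0 := by
    have := congrArg conj' h1
    simpa [map_add, map_mul] using this
  have key : conj' v1d * (ud * xc - uc * xd) = 0 := by
    linear_combination xc * h1' - uc * horth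
  have := (mul_eq_zero.mp key).resolve_left (fun h => hv1d (conj_eq_zero h))
  linear_combination this

private lemma zero_prop {ua ub uc ud xa xb xc xd : ℂ}
    (ha : ua ≠ 0) (hb : ub ≠ 0) (hc : uc ≠ 0) (hd : ud ≠ 0)
    (r1 : ub * xa = ua * xb) (r2 : ud * xc = uc * xd)
    (hsum : conj' ua * xa + conj' ub * xb + conj' uc * xc + conj' ud * xd = 0)
    (hz : xa = 0 ∨ xb = 0 ∨ xc = 0 ∨ xd = 0) :
    xa = 0 ∧ xb = 0 ∧ xc = 0 ∧ xd = 0 := by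
  have pair1 : (xa = 0 ∨ xb = 0) → xa = 0 ∧ xb = 0 := by
    rintro (h | h)
    · refine ⟨h, ?_⟩
      have : ua * xb = 0 := by rw [← r1, h, mul_zero]
      exact (mul_eq_zero.mp this).resolve_left ha
    · refine ⟨?_, h⟩
      have : ub * xa = 0 := by rw [r1, h, mul_zero]
      exact (mul_eq_zero.mp this).resolve_left hb
  have pair2 : (xc = 0 ∨ xd = 0) → xc = 0 ∧ xd = 0 := by
    rintro (h | h)
    · refine ⟨h, ?_⟩
      have : uc * xd = 0 := by rw [← r2, h, mul_zero]
      exact (mul_eq_zero.mp this).resolve_left hc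
    · refine ⟨?_, h⟩
      have : ud * xc = 0 := by rw [r2, h, mul_zero]
      exact (mul_eq_zero.mp this).resolve_left hd
  -- given one pair zero, kill the other pair
  have kill2 : xa = 0 → xb = 0 → xc = 0 ∧ xd = 0 := by
    intro h1 h2
    have hs : conj' uc * xc + conj' ud * xd = 0 := by
      rw [h1, h2] at hsum; linear_combination hsum
    have key : (uc * conj' uc + ud * conj' ud) * xc = 0 := by
      linear_combination uc * hs + conj' ud * r2
    have hxc : xc = 0 := (mul_eq_zero.mp key).resolve_left (pos_comb hc)
    exact pair2 (Or.inl hxc)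
  have kill1 : xc = 0 → xd = 0 → xa = 0 ∧ xb = 0 := by
    intro h1 h2
    have hs : conj' ua * xa + conj' ub * xb = 0 := by
      rw [h1, h2] at hsum; linear_combination hsum
    have key : (ua * conj' ua + ub * conj' ub) * xa = 0 := by
      linear_combination ua * hs + conj' ub * r1
    have hxa : xa = 0 := (mul_eq_zero.mp key).resolve_left (pos_comb ha)
    exact pair1 (Or.inl hxa)
  rcases hz with h | h | h | h
  · obtain ⟨h1, h2⟩ := pair1 (Or.inl h); obtain ⟨h3, h4⟩ := kill2 h1 h2; exact ⟨h1, h2, h3, h4⟩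
  · obtain ⟨h1, h2⟩ := pair1 (Or.inr h); obtain ⟨h3, h4⟩ := kill2 h1 h2; exact ⟨h1, h2, h3, h4⟩
  · obtain ⟨h3, h4⟩ := pair2 (Or.inl h); obtain ⟨h1, h2⟩ := kill1 h3 h4; exact ⟨h1, h2, h3, h4⟩
  · obtain ⟨h3, h4⟩ := pair2 (Or.inr h); obtain ⟨h1, h2⟩ := kill1 h3 h4; exact ⟨h1, h2, h3, h4⟩

private lemma L_2p2 {α1 β1 α2 β2 α3 γ3 α4 γ4 N M : ℂ}
    (h12 : conj' α1 * α2 + conj' β1 * β2 * N = 0)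
    (h34 : conj' α3 * α4 + conj' γ3 * γ4 * M = 0)
    (n1 : conj' α1 * α1 + conj' β1 * β1 * N = 1)
    (n2 : conj' α2 * α2 + conj' β2 * β2 * N = 1)
    (n3 : conj' α3 * α3 + conj' γ3 * γ3 * M = 1)
    (n4 : conj' α4 * α4 + conj' γ4 * γ4 * M = 1)
    (c13 : conj' α1 * α3 = 0) (c14 : conj' α1 * α4 = 0)
    (c23 : conj' α2 * α3 = 0) (c24 : conj' α2 * α4 = 0) : False := by
  have hzero12 : α1 = 0 → α2 = 0 → False := by
    intro h1 h2
    have h12' : conj' β1 * β2 * N = 0 := by rw [h1, h2] at h12; linear_combination h12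
    have n1' : conj' β1 * β1 * N = 1 := by rw [h1] at n1; linear_combination n1
    have n2' : conj' β2 * β2 * N = 1 := by rw [h2] at n2; linear_combination n2
    have e : (conj' β1 * β2 * N) * (conj' β2 * β1 * N) = 1 := by
      calc (conj' β1 * β2 * N) * (conj' β2 * β1 * N)
          = (conj' β1 * β1 * N) * (conj' β2 * β2 * N) := by ring
        _ = 1 := by rw [n1', n2', mul_one]
    rw [h12', zero_mul] at e
    exact zero_ne_one e
  rcases eq_or_ne α3 0 with h3 | h3
  · rcases eq_or_ne α4 0 with h4 | h4
    · have h34' : conj' γ3 * γ4 * M = 0 := by rw [h3, h4] at h34; linear_combination h34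
      have n3' : conj' γ3 * γ3 * M = 1 := by rw [h3] at n3; linear_combination n3
      have n4' : conj' γ4 * γ4 * M = 1 := by rw [h4] at n4; linear_combination n4
      have e : (conj' γ3 * γ4 * M) * (conj' γ4 * γ3 * M) = 1 := by
        calc (conj' γ3 * γ4 * M) * (conj' γ4 * γ3 * M)
            = (conj' γ3 * γ3 * M) * (conj' γ4 * γ4 * M) := by ring
          _ = 1 := by rw [n3', n4', mul_one]
      rw [h34', zero_mul] at e
      exact zero_ne_one e
    · have h1 : α1 = 0 := by
        have := c14
        rcases mul_eq_zero.mp this with h | h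
        · exact conj_eq_zero h
        · exact absurd h h4
      have h2 : α2 = 0 := by
        rcases mul_eq_zero.mp c24 with h | h
        · exact conj_eq_zero h
        · exact absurd h h4
      exact hzero12 h1 h2
  · have h1 : α1 = 0 := by
      rcases mul_eq_zero.mp c13 with h | h
      · exact conj_eq_zero h
      · exact absurd h h3
    have h2 : α2 = 0 := by
      rcases mul_eq_zero.mp c23 with h | h
      · exact conj_eq_zero h
      · exact absurd h h3
    exact hzero12 h1 h2



private lemma sum_one6 (f : Fin 6 → ℂ) (c : Fin 6) (h : ∀ s, s ≠ c → f s = 0) :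
    ∑ s, f s = f c :=
  Finset.sum_eq_single c (fun b _ hb => h b hb) (fun hc => absurd (Finset.mem_univ c) hc)

private lemma sum_two6 (f : Fin 6 → ℂ) (c d : Fin 6) (hcd : c ≠ d)
    (h : ∀ s, s ≠ c → s ≠ d → f s = 0) : ∑ s, f s = f c + f d := by
  rw [← Finset.sum_subset (Finset.subset_univ ({c, d} : Finset (Fin 6)))
      (fun x _ hx => h x (fun e => hx (by simp [e])) (fun e => hx (by simp [e])))]
  exact Finset.sum_pair hcd

private lemma sum_three6 (f : Fin 6 → ℂ) (c d e : Fin 6) (hcd : c ≠ d) (hce : c ≠ e)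
    (hde : d ≠ e) (h : ∀ s, s ≠ c → s ≠ d → s ≠ e → f s = 0) :
    ∑ s, f s = f c + f d + f e := by
  rw [← Finset.sum_subset (Finset.subset_univ ({c, d, e} : Finset (Fin 6)))
      (fun x _ hx => h x (fun h' => hx (by simp [h'])) (fun h' => hx (by simp [h']))
        (fun h' => hx (by simp [h'])))]
  rw [Finset.sum_insert (by simp [hcd, hce]), Finset.sum_pair hde]
  ring

private lemma sum_four6 (f : Fin 6 → ℂ) (a b c d : Fin 6) (hab : a ≠ b) (hac : a ≠ c)
    (had : a ≠ d) (hbc : b ≠ c) (hbd : b ≠ d) (hcd : c ≠ d)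
    (h : ∀ s, s ≠ a → s ≠ b → s ≠ c → s ≠ d → f s = 0) :
    ∑ s, f s = f a + f b + f c + f d := by
  rw [← Finset.sum_subset (Finset.subset_univ ({a, b, c, d} : Finset (Fin 6)))
      (fun x _ hx => h x (fun h' => hx (by simp [h'])) (fun h' => hx (by simp [h']))
        (fun h' => hx (by simp [h'])) (fun h' => hx (by simp [h'])))]
  rw [Finset.sum_insert (by simp [hab, hac, had]), Finset.sum_insert (by simp [hbc, hbd]),
    Finset.sum_pair hcd]
  ring

private lemma eq_of_ne5 {j t s1 s2 s3 : Fin 6}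
    (h1 : j ≠ t) (h2 : j ≠ s1) (h3 : j ≠ s2) (h4 : j ≠ s3)
    (h5 : t ≠ s1) (h6 : t ≠ s2) (h7 : t ≠ s3)
    (h8 : s1 ≠ s2) (h9 : s1 ≠ s3) (h10 : s2 ≠ s3)
    {x y : Fin 6}
    (hx1 : x ≠ j) (hx2 : x ≠ t) (hx3 : x ≠ s1) (hx4 : x ≠ s2) (hx5 : x ≠ s3)
    (hy1 : y ≠ j) (hy2 : y ≠ t) (hy3 : y ≠ s1) (hy4 : y ≠ s2) (hy5 : y ≠ s3) :
    x = y := by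
  have h6' : ({x, j, t, s1, s2, s3} : Finset (Fin 6)).card = 6 := by
    rw [Finset.card_insert_of_notMem (by simp [hx1, hx2, hx3, hx4, hx5]),
      Finset.card_insert_of_notMem (by simp [h1, h2, h3, h4]),
      Finset.card_insert_of_notMem (by simp [h5, h6, h7]),
      Finset.card_insert_of_notMem (by simp [h8, h9]),
      Finset.card_insert_of_notMem (by simp [h10]), Finset.card_singleton]
  have huniv : ({x, j, t, s1, s2, s3} : Finset (Fin 6)) = univ :=
    Finset.eq_univ_of_card _ (by rw [h6']; rfl)
  have hy : y ∈ ({x, j, t, s1, s2, s3} : Finset (Fin 6)) := huniv ▸ Finset.mem_univ y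
  simp only [Finset.mem_insert, Finset.mem_singleton] at hy
  rcases hy with h | h | h | h | h | h
  · exact h.symm
  · exact absurd h hy1
  · exact absurd h hy2
  · exact absurd h hy3
  · exact absurd h hy4
  · exact absurd h hy5

private lemma exists_pair_compl {j t a b : Fin 6} (hjt : j ≠ t) (hja : j ≠ a) (hjb : j ≠ b)
    (hta : t ≠ a) (htb : t ≠ b) (hab : a ≠ b) :
    ∃ c d : Fin 6, c ≠ d ∧ c ≠ j ∧ c ≠ t ∧ c ≠ a ∧ c ≠ b ∧ d ≠ j ∧ d ≠ t ∧ d ≠ a ∧ d ≠ b ∧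
      (∀ s, s ≠ j → s ≠ t → s ≠ a → s ≠ b → s = c ∨ s = d) := by
  have hcard : ({j, t, a, b} : Finset (Fin 6)).card = 4 := by
    rw [Finset.card_insert_of_notMem (by simp [hjt, hja, hjb]),
      Finset.card_insert_of_notMem (by simp [hta, htb]),
      Finset.card_insert_of_notMem (by simp [hab]), Finset.card_singleton]
  have h2 : (({j, t, a, b} : Finset (Fin 6))ᶜ).card = 2 := by
    rw [Finset.card_compl, hcard]; rfl
  obtain ⟨c, d, hcd, heq⟩ := Finset.card_eq_two.mp h2
  have hc : c ∉ ({j, t, a, b} : Finset (Fin 6)) := by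
    rw [← Finset.mem_compl, heq]; simp
  have hd : d ∉ ({j, t, a, b} : Finset (Fin 6)) := by
    rw [← Finset.mem_compl, heq]; simp
  simp only [Finset.mem_insert, Finset.mem_singleton, not_or] at hc hd
  refine ⟨c, d, hcd, hc.1, hc.2.1, hc.2.2.1, hc.2.2.2, hd.1, hd.2.1, hd.2.2.1, hd.2.2.2, ?_⟩
  intro s hs1 hs2 hs3 hs4
  have : s ∈ (({j, t, a, b} : Finset (Fin 6))ᶜ) := by
    rw [Finset.mem_compl]; simp [hs1, hs2, hs3, hs4]
  rw [heq] at this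
  simpa using this

private lemma fin4_others3 (m4 : Fin 4) :
    ∃ p q r : Fin 4, p ≠ q ∧ p ≠ r ∧ q ≠ r ∧ p ≠ m4 ∧ q ≠ m4 ∧ r ≠ m4 ∧
      (∀ m, m ≠ m4 → m = p ∨ m = q ∨ m = r) := by
  have h3 : (({m4} : Finset (Fin 4))ᶜ).card = 3 := by
    rw [Finset.card_compl, Finset.card_singleton]; rfl
  obtain ⟨p, q, r, hpq, hpr, hqr, heq⟩ := Finset.card_eq_three.mp h3
  have hp : p ≠ m4 := by
    have : p ∈ (({m4} : Finset (Fin 4))ᶜ) := by rw [heq]; simp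
    simpa using this
  have hq : q ≠ m4 := by
    have : q ∈ (({m4} : Finset (Fin 4))ᶜ) := by rw [heq]; simp
    simpa using this
  have hr : r ≠ m4 := by
    have : r ∈ (({m4} : Finset (Fin 4))ᶜ) := by rw [heq]; simp
    simpa using this
  refine ⟨p, q, r, hpq, hpr, hqr, hp, hq, hr, fun m hm => ?_⟩
  have : m ∈ (({m4} : Finset (Fin 4))ᶜ) := by simp [hm]
  rw [heq] at this
  simpa using this

private lemma fin4_others2 {m4 m1 : Fin 4} (h : m4 ≠ m1) :
    ∃ m2 m3 : Fin 4, m2 ≠ m3 ∧ m2 ≠ m4 ∧ m2 ≠ m1 ∧ m3 ≠ m4 ∧ m3 ≠ m1 ∧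
      (∀ m, m ≠ m4 → m ≠ m1 → m = m2 ∨ m = m3) := by
  have h2 : (({m4, m1} : Finset (Fin 4))ᶜ).card = 2 := by
    rw [Finset.card_compl, Finset.card_insert_of_notMem (by simp [h]), Finset.card_singleton]
    rfl
  obtain ⟨m2, m3, h23, heq⟩ := Finset.card_eq_two.mp h2
  have hm2 : m2 ∉ ({m4, m1} : Finset (Fin 4)) := by rw [← Finset.mem_compl, heq]; simp
  have hm3 : m3 ∉ ({m4, m1} : Finset (Fin 4)) := by rw [← Finset.mem_compl, heq]; simp
  simp only [Finset.mem_insert, Finset.mem_singleton, not_or] at hm2 hm3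
  refine ⟨m2, m3, h23, hm2.1, hm2.2, hm3.1, hm3.2, fun m hm1 hm2' => ?_⟩
  have : m ∈ (({m4, m1} : Finset (Fin 4))ᶜ) := by simp [hm1, hm2']
  rw [heq] at this
  simpa using this


private lemma L_param {p q xc xd : ℂ} (hp : p ≠ 0) (h : p * xc + q * xd = 0) :
    ∃ β : ℂ, xc = q * β ∧ xd = -(p * β) := by
  refine ⟨-(xd / p), ?_, ?_⟩
  · field_simp
    linear_combination h
  · field_simp

private lemma L_bigT {u x y : Fin 6 → ℂ} {j t : Fin 6} (hjt : j ≠ t)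
    (huj : u j = 0) (hut : u t = 0)
    (hus : ∀ s, s ≠ j → s ≠ t → u s ≠ 0)
    (hxj : x j = 0)
    (hux : ∑ s, conj' (u s) * x s = 0)
    (hyj : y j = 0) (hyt : y t = 0)
    (hdis : ∀ s, x s * y s = 0)
    {s1 s2 s3 : Fin 6} (h12 : s1 ≠ s2) (h13 : s1 ≠ s3) (h23 : s2 ≠ s3)
    (hy1 : y s1 ≠ 0) (hy2 : y s2 ≠ 0) (hy3 : y s3 ≠ 0) :
    ∀ s, s ≠ t → x s = 0 := by
  have hs1j : s1 ≠ j := fun e => hy1 (e ▸ hyj)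
  have hs2j : s2 ≠ j := fun e => hy2 (e ▸ hyj)
  have hs3j : s3 ≠ j := fun e => hy3 (e ▸ hyj)
  have hs1t : s1 ≠ t := fun e => hy1 (e ▸ hyt)
  have hs2t : s2 ≠ t := fun e => hy2 (e ▸ hyt)
  have hs3t : s3 ≠ t := fun e => hy3 (e ▸ hyt)
  have hx1 : x s1 = 0 := by
    rcases mul_eq_zero.mp (hdis s1) with h | h
    · exact h
    · exact absurd h hy1
  have hx2 : x s2 = 0 := by
    rcases mul_eq_zero.mp (hdis s2) with h | h
    · exact h
    · exact absurd h hy2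
  have hx3 : x s3 = 0 := by
    rcases mul_eq_zero.mp (hdis s3) with h | h
    · exact h
    · exact absurd h hy3
  intro s hst
  by_cases hsj : s = j
  · rw [hsj]; exact hxj
  by_cases hss1 : s = s1
  · rw [hss1]; exact hx1
  by_cases hss2 : s = s2
  · rw [hss2]; exact hx2
  by_cases hss3 : s = s3
  · rw [hss3]; exact hx3
  have hsum : ∑ σ, conj' (u σ) * x σ = conj' (u s) * x s := by
    apply sum_one6
    intro σ hσ
    by_cases e1 : σ = j
    · rw [e1, huj]; simp
    by_cases e2 : σ = t
    · rw [e2, hut]; simp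
    by_cases e3 : σ = s1
    · rw [e3, hx1]; ring
    by_cases e4 : σ = s2
    · rw [e4, hx2]; ring
    by_cases e5 : σ = s3
    · rw [e5, hx3]; ring
    exact absurd (eq_of_ne5 hjt.symm.symm hs1j.symm hs2j.symm hs3j.symm hs1t.symm
      hs2t.symm hs3t.symm h12 h13 h23 e1 e2 e3 e4 e5 hsj hst hss1 hss2 hss3) hσ
  rw [hux] at hsum
  rcases mul_eq_zero.mp hsum.symm with h | h
  · exact absurd (conj_eq_zero h) (hus s hsj hst)
  · exact h

/-- classification of a row `m ≠ m1` by the support of `y = w m`,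
given that `w m1` is supported exactly on `{a,b}`. -/
private lemma L_classify {u w1 x y : Fin 6 → ℂ} {j t a b c d : Fin 6}
    (hjt : j ≠ t) (hab : a ≠ b)
    (hcov : ∀ s, s ≠ j → s ≠ t → s ≠ a → s ≠ b → s = c ∨ s = d)
    (hus : ∀ s, s ≠ j → s ≠ t → u s ≠ 0) (huj : u j = 0) (hut : u t = 0)
    (hw1a : w1 a ≠ 0) (hw1b : w1 b ≠ 0) (hw1T : ∀ s, s ≠ a → s ≠ b → w1 s = 0)
    (hxj : x j = 0) (hux : ∑ s, conj' (u s) * x s = 0)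
    (hdis : ∀ s, x s * y s = 0)
    (hyj : y j = 0) (hyt : y t = 0) (hyex : ∃ s, y s ≠ 0)
    (horth : ∑ s, conj' (w1 s) * y s = 0)
    (hnEp : ¬(∀ s, s ≠ t → x s = 0)) :
    (y c ≠ 0 ∧ ∀ s, s ≠ c → y s = 0) ∨ (y d ≠ 0 ∧ ∀ s, s ≠ d → y s = 0) ∨
    (y a ≠ 0 ∧ y b ≠ 0 ∧ ∀ s, s ≠ a → s ≠ b → y s = 0) ∨
    (y c ≠ 0 ∧ y d ≠ 0 ∧ ∀ s, s ≠ c → s ≠ d → y s = 0) := by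
  have horth2 : conj' (w1 a) * y a + conj' (w1 b) * y b = 0 := by
    rw [← horth]
    exact (sum_two6 (fun s => conj' (w1 s) * y s) a b hab
      (fun s h1 h2 => by simp [hw1T s h1 h2])).symm
  have hno3 : ∀ s, s ≠ a → s ≠ b → y s ≠ 0 → (y a ≠ 0 ∧ y b ≠ 0) → False := by
    intro s hsa hsb hys ⟨hya, hyb⟩
    exact hnEp (L_bigT hjt huj hut hus hxj hux hyj hyt hdis hab hsa.symm hsb.symm hya hyb hys)
  by_cases hya : y a = 0
  · have hyb : y b = 0 := by
      rw [hya] at horth2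
      simp only [mul_zero, zero_add] at horth2
      rcases mul_eq_zero.mp horth2 with h | h
      · exact absurd (conj_eq_zero h) hw1b
      · exact h
    by_cases hyc : y c = 0
    · by_cases hyd : y d = 0
      · exfalso
        obtain ⟨s, hs⟩ := hyex
        have hsj : s ≠ j := fun e => hs (e ▸ hyj)
        have hst : s ≠ t := fun e => hs (e ▸ hyt)
        have hsa : s ≠ a := fun e => hs (e ▸ hya)
        have hsb : s ≠ b := fun e => hs (e ▸ hyb)
        rcases hcov s hsj hst hsa hsb with e | e
        · exact hs (e ▸ hyc)
        · exact hs (e ▸ hyd)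
      · refine Or.inr (Or.inl ⟨hyd, fun s hsd => ?_⟩)
        by_cases hsj : s = j
        · rw [hsj]; exact hyj
        by_cases hst : s = t
        · rw [hst]; exact hyt
        by_cases hsa : s = a
        · rw [hsa]; exact hya
        by_cases hsb : s = b
        · rw [hsb]; exact hyb
        rcases hcov s hsj hst hsa hsb with e | e
        · rw [e]; exact hyc
        · exact absurd e hsd
    · by_cases hyd : y d = 0
      · refine Or.inl ⟨hyc, fun s hsc => ?_⟩
        by_cases hsj : s = j
        · rw [hsj]; exact hyj
        by_cases hst : s = t
        · rw [hst]; exact hyt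
        by_cases hsa : s = a
        · rw [hsa]; exact hya
        by_cases hsb : s = b
        · rw [hsb]; exact hyb
        rcases hcov s hsj hst hsa hsb with e | e
        · exact absurd e hsc
        · rw [e]; exact hyd
      · refine Or.inr (Or.inr (Or.inr ⟨hyc, hyd, fun s hsc hsd => ?_⟩))
        by_cases hsj : s = j
        · rw [hsj]; exact hyj
        by_cases hst : s = t
        · rw [hst]; exact hyt
        by_cases hsa : s = a
        · rw [hsa]; exact hya
        by_cases hsb : s = b
        · rw [hsb]; exact hyb
        rcases hcov s hsj hst hsa hsb with e | e
        · exact absurd e hsc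
        · exact absurd e hsd
  · have hyb : y b ≠ 0 := by
      intro hyb
      rw [hyb] at horth2
      simp only [mul_zero, add_zero] at horth2
      rcases mul_eq_zero.mp horth2 with h | h
      · exact absurd (conj_eq_zero h) hw1a
      · exact absurd h hya
    refine Or.inr (Or.inr (Or.inl ⟨hya, hyb, fun s hsa hsb => ?_⟩))
    by_contra hys
    exact hno3 s hsa hsb hys ⟨hya, hyb⟩

private lemma core_s8 (u : Fin 6 → ℂ) (v w : Fin 4 → Fin 6 → ℂ) (j t : Fin 6)
    (hjt : j ≠ t)
    (huj : u j = 0) (hut : u t = 0) (hus : ∀ s, s ≠ j → s ≠ t → u s ≠ 0)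
    (hov : ∀ m l, m ≠ l → ∑ s, conj' (v m s) * v l s = 0)
    (hnv : ∀ m, ∑ s, conj' (v m s) * v m s = 1)
    (how : ∀ m l, m ≠ l → ∑ s, conj' (w m s) * w l s = 0)
    (hnw : ∀ m, ∑ s, conj' (w m s) * w m s = 1)
    (hvu : ∀ m, ∑ s, conj' (u s) * v m s = 0)
    (hvj : ∀ m, v m j = 0) (hwj : ∀ m, w m j = 0) (hwt : ∀ m, w m t = 0)
    (hdis : ∀ m s, v m s * w m s = 0)
    (mstar : Fin 4) (a0 b0 : Fin 6) (hab0 : a0 ≠ b0)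
    (hwa0 : w mstar a0 ≠ 0) (hwb0 : w mstar b0 ≠ 0) : False := by
  -- basic facts
  have wex : ∀ m : Fin 4, ∃ s, w m s ≠ 0 := by
    intro m
    by_contra hc
    push_neg at hc
    have h0 := hnw m
    rw [Finset.sum_eq_zero (fun s _ => by rw [hc s]; ring)] at h0
    exact zero_ne_one h0
  have hnzv : ∀ m : Fin 4, ¬(∀ s, v m s = 0) := by
    intro m hc
    have h0 := hnv m
    rw [Finset.sum_eq_zero (fun s _ => by rw [hc s]; ring)] at h0
    exact zero_ne_one h0
  have hkill : ∀ (m m' : Fin 4) (s0 : Fin 6), m ≠ m' → w m s0 ≠ 0 →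
      (∀ s, s ≠ s0 → w m s = 0) → w m' s0 = 0 := by
    intro m m' s0 hmm hws0 hsing
    have e2 : ∑ s, conj' (w m s) * w m' s = conj' (w m s0) * w m' s0 :=
      sum_one6 (fun s => conj' (w m s) * w m' s) s0 (fun s hs => by simp [hsing s hs])
    rw [how m m' hmm] at e2
    rcases mul_eq_zero.mp e2.symm with h | h
    · exact absurd (conj_eq_zero h) hws0
    · exact h
  have hSS : ∀ (m m' : Fin 4) (s0 : Fin 6), m ≠ m' → w m s0 ≠ 0 →
      (∀ s, s ≠ s0 → w m s = 0) → w m' s0 ≠ 0 → False := by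
    intro m m' s0 hmm h1 h2 h3
    exact h3 (hkill m m' s0 hmm h1 h2)
  by_cases hE : ∃ m : Fin 4, ∀ s, s ≠ t → v m s = 0
  · -- CASE A : some row of v is concentrated on coordinate t
    obtain ⟨m4, hm4⟩ := hE
    have hv4t : v m4 t ≠ 0 := by
      intro h0
      exact hnzv m4 (fun s => by
        by_cases e : s = t
        · rw [e]; exact h0
        · exact hm4 s e)
    have hvt : ∀ m, m ≠ m4 → v m t = 0 := by
      intro m hm
      have e2 : ∑ s, conj' (v m4 s) * v m s = conj' (v m4 t) * v m t :=
        sum_one6 (fun s => conj' (v m4 s) * v m s) t (fun s hs => by simp [hm4 s hs])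
      rw [hov m4 m (Ne.symm hm)] at e2
      rcases mul_eq_zero.mp e2.symm with h | h
      · exact absurd (conj_eq_zero h) hv4t
      · exact h
    have hnE4 : ∀ m, m ≠ m4 → ¬(∀ s, s ≠ t → v m s = 0) := by
      intro m hm hEp
      exact hnzv m (fun s => by
        by_cases e : s = t
        · rw [e]; exact hvt m hm
        · exact hEp s e)
    -- key contradiction when some row m1 ≠ m4 has two nonzero w-coordinates
    have keyA1 : ∀ (m1 : Fin 4) (a b : Fin 6), m1 ≠ m4 → a ≠ b →
        w m1 a ≠ 0 → w m1 b ≠ 0 → False := by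
      intro m1 a b hm14 hab hwa hwb
      have haj : a ≠ j := fun e => hwa (e ▸ hwj m1)
      have hat : a ≠ t := fun e => hwa (e ▸ hwt m1)
      have hbj : b ≠ j := fun e => hwb (e ▸ hwj m1)
      have hbt : b ≠ t := fun e => hwb (e ▸ hwt m1)
      have hT2 : ∀ s, s ≠ a → s ≠ b → w m1 s = 0 := by
        intro s hsa hsb
        by_contra hws
        exact hnE4 m1 hm14 (L_bigT hjt huj hut hus (hvj m1) (hvu m1) (hwj m1) (hwt m1)
          (hdis m1) hab hsa.symm hsb.symm hwa hwb hws)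
      obtain ⟨c, d, hcd, hcj, hct, hca, hcb, hdj, hdt, hda, hdb, hcov⟩ :=
        exists_pair_compl hjt haj.symm hbj.symm hat.symm hbt.symm hab
      have hucn : u c ≠ 0 := hus c hcj hct
      have hudn : u d ≠ 0 := hus d hdj hdt
      -- facts about x := v m for rows m ≠ m4 whose w is supported away from row's v
      have hva : ∀ m, w m a ≠ 0 → v m a = 0 := fun m h => (mul_eq_zero.mp (hdis m a)).resolve_right h
      have hvb : ∀ m, w m b ≠ 0 → v m b = 0 := fun m h => (mul_eq_zero.mp (hdis m b)).resolve_right h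
      have hvc : ∀ m, w m c ≠ 0 → v m c = 0 := fun m h => (mul_eq_zero.mp (hdis m c)).resolve_right h
      have hvd : ∀ m, w m d ≠ 0 → v m d = 0 := fun m h => (mul_eq_zero.mp (hdis m d)).resolve_right h
      -- structure of rows supported on {c,d} : "AB-type" rows (w supported on {a,b})
      have hABrow : ∀ m, m ≠ m4 → w m a ≠ 0 → w m b ≠ 0 →
          (conj' (u c) * v m c + conj' (u d) * v m d = 0) ∧
          (conj' (v m c) * v m c + conj' (v m d) * v m d = 1) := by
        intro m hm hwma hwmb
        constructor
        · rw [← hvu m]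
          refine (sum_two6 (fun s => conj' (u s) * v m s) c d hcd ?_).symm
          intro s h1 h2
          by_cases e : s = j
          · simp [e, huj]
          by_cases e2 : s = t
          · simp [e2, hut]
          by_cases e3 : s = a
          · simp [e3, hva m hwma]
          by_cases e4 : s = b
          · simp [e4, hvb m hwmb]
          rcases hcov s e e2 e3 e4 with h | h
          · exact absurd h h1
          · exact absurd h h2
        · rw [← hnv m]
          refine (sum_two6 (fun s => conj' (v m s) * v m s) c d hcd ?_).symm
          intro s h1 h2
          by_cases e : s = j
          · simp [e, hvj m]
          by_cases e2 : s = t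
          · simp [e2, hvt m hm]
          by_cases e3 : s = a
          · simp [e3, hva m hwma]
          by_cases e4 : s = b
          · simp [e4, hvb m hwmb]
          rcases hcov s e e2 e3 e4 with h | h
          · exact absurd h h1
          · exact absurd h h2
      obtain ⟨hv1sum, hv1n⟩ := hABrow m1 hm14 hwa hwb
      have hv1dn : v m1 d ≠ 0 := by
        intro h0
        rw [h0] at hv1sum hv1n
        have : conj' (u c) * v m1 c = 0 := by linear_combination hv1sum
        rcases mul_eq_zero.mp this with h | h
        · exact absurd (conj_eq_zero h) hucn
        · rw [h] at hv1n; simp at hv1n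
      have hv1cn : v m1 c ≠ 0 := by
        intro h0
        rw [h0] at hv1sum hv1n
        have : conj' (u d) * v m1 d = 0 := by linear_combination hv1sum
        rcases mul_eq_zero.mp this with h | h
        · exact absurd (conj_eq_zero h) hudn
        · rw [h] at hv1n; simp at hv1n
      -- orthogonality of any other row against v m1 (supported on {c,d})
      have horthv1 : ∀ m, m ≠ m1 → m ≠ m4 →
          conj' (v m1 c) * v m c + conj' (v m1 d) * v m d = 0 := by
        intro m hm1 hm4'
        rw [← hov m1 m (Ne.symm hm1)]
        refine (sum_two6 (fun s => conj' (v m1 s) * v m s) c d hcd ?_).symm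
        intro s h1 h2
        by_cases e : s = j
        · simp [e, hvj m1]
        by_cases e2 : s = t
        · simp [e2, hvt m1 hm14]
        by_cases e3 : s = a
        · simp [e3, hva m1 hwa]
        by_cases e4 : s = b
        · simp [e4, hvb m1 hwb]
        rcases hcov s e e2 e3 e4 with h | h
        · exact absurd h h1
        · exact absurd h h2
      have hrel : ∀ m, m ≠ m1 → m ≠ m4 → u d * v m c = u c * v m d := by
        intro m hm1 hm4'
        exact rel_pair hv1sum hv1dn (horthv1 m hm1 hm4')
      obtain ⟨m2, m3, h23, hm24, hm21, hm34, hm31, hoth⟩ := fin4_others2 (Ne.symm hm14)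
      -- classification of rows m2 m3
      have hcls : ∀ m, m ≠ m4 → m ≠ m1 →
          (w m c ≠ 0 ∧ ∀ s, s ≠ c → w m s = 0) ∨ (w m d ≠ 0 ∧ ∀ s, s ≠ d → w m s = 0) ∨
          (w m a ≠ 0 ∧ w m b ≠ 0 ∧ ∀ s, s ≠ a → s ≠ b → w m s = 0) ∨
          (w m c ≠ 0 ∧ w m d ≠ 0 ∧ ∀ s, s ≠ c → s ≠ d → w m s = 0) := by
        intro m hm4' hm1'
        exact L_classify hjt hab hcov hus huj hut hwa hwb hT2 (hvj m) (hvu m) (hdis m)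
          (hwj m) (hwt m) (wex m) (how m1 m (Ne.symm hm1')) (hnE4 m hm4')
      -- handler : AB-type row m (w m nonzero at a and b) gives contradiction with L_pair
      have hTAB : ∀ m, m ≠ m4 → m ≠ m1 → w m a ≠ 0 → w m b ≠ 0 → False := by
        intro m hm4' hm1' hwma hwmb
        obtain ⟨hy, hyn⟩ := hABrow m hm4' hwma hwmb
        exact L_pair (fun h => hucn (conj_eq_zero h)) (fun h => hudn (conj_eq_zero h))
          hv1sum hy (horthv1 m hm1' hm4') hv1n hyn
      -- handler : CD-type row m' plus any other row m'' gives contradiction with zero_prop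
      have hCD : ∀ m' m'', m' ≠ m4 → m' ≠ m1 → m'' ≠ m4 → m'' ≠ m1 → m' ≠ m'' →
          w m' c ≠ 0 → w m' d ≠ 0 → False := by
        intro m' m'' h'4 h'1 h''4 h''1 h'' hwc hwd
        -- v m' is supported on {a,b}
        have h2sum : conj' (u a) * v m' a + conj' (u b) * v m' b = 0 := by
          rw [← hvu m']
          refine (sum_two6 (fun s => conj' (u s) * v m' s) a b hab ?_).symm
          intro s h1 h2
          by_cases e : s = j
          · simp [e, huj]
          by_cases e2 : s = t
          · simp [e2, hut]
          by_cases e3 : s = c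
          · simp [e3, hvc m' hwc]
          by_cases e4 : s = d
          · simp [e4, hvd m' hwd]
          rcases hcov s e e2 h1 h2 with h | h
          · exact absurd h e3
          · exact absurd h e4
        have h2n : conj' (v m' a) * v m' a + conj' (v m' b) * v m' b = 1 := by
          rw [← hnv m']
          refine (sum_two6 (fun s => conj' (v m' s) * v m' s) a b hab ?_).symm
          intro s h1 h2
          by_cases e : s = j
          · simp [e, hvj m']
          by_cases e2 : s = t
          · simp [e2, hvt m' h'4]
          by_cases e3 : s = c
          · simp [e3, hvc m' hwc]
          by_cases e4 : s = d
          · simp [e4, hvd m' hwd]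
          rcases hcov s e e2 h1 h2 with h | h
          · exact absurd h e3
          · exact absurd h e4
        have hv'bn : v m' b ≠ 0 := by
          intro h0
          rw [h0] at h2sum h2n
          have : conj' (u a) * v m' a = 0 := by linear_combination h2sum
          rcases mul_eq_zero.mp this with h | h
          · exact absurd (conj_eq_zero h) (hus a haj hat)
          · rw [h] at h2n; simp at h2n
        -- relations for x := v m''
        have r2 : u d * v m'' c = u c * v m'' d := hrel m'' h''1 h''4
        have r1 : u b * v m'' a = u a * v m'' b := by
          refine rel_pair h2sum hv'bn ?_
          rw [← hov m' m'' h'']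
          refine (sum_two6 (fun s => conj' (v m' s) * v m'' s) a b hab ?_).symm
          intro s h1 h2
          by_cases e : s = j
          · simp [e, hvj m']
          by_cases e2 : s = t
          · simp [e2, hvt m' h'4]
          by_cases e3 : s = c
          · simp [e3, hvc m' hwc]
          by_cases e4 : s = d
          · simp [e4, hvd m' hwd]
          rcases hcov s e e2 h1 h2 with h | h
          · exact absurd h e3
          · exact absurd h e4
        have hsum4 : conj' (u a) * v m'' a + conj' (u b) * v m'' b +
            conj' (u c) * v m'' c + conj' (u d) * v m'' d = 0 := by
          rw [← hvu m'']
          refine (sum_four6 (fun s => conj' (u s) * v m'' s) a b c d hab hca.symm hda.symm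
            hcb.symm hdb.symm hcd ?_).symm
          intro s h1 h2 h3 h4
          by_cases e : s = j
          · simp [e, huj]
          by_cases e2 : s = t
          · simp [e2, hut]
          rcases hcov s e e2 h1 h2 with h | h
          · exact absurd h h3
          · exact absurd h h4
        have hz : v m'' a = 0 ∨ v m'' b = 0 ∨ v m'' c = 0 ∨ v m'' d = 0 := by
          obtain ⟨s0, hs0⟩ := wex m''
          have hs0j : s0 ≠ j := fun e => hs0 (e ▸ hwj m'')
          have hs0t : s0 ≠ t := fun e => hs0 (e ▸ hwt m'')
          have hx0 : v m'' s0 = 0 := (mul_eq_zero.mp (hdis m'' s0)).resolve_right hs0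
          by_cases e3 : s0 = a
          · exact Or.inl (e3 ▸ hx0)
          by_cases e4 : s0 = b
          · exact Or.inr (Or.inl (e4 ▸ hx0))
          rcases hcov s0 hs0j hs0t e3 e4 with h | h
          · exact Or.inr (Or.inr (Or.inl (h ▸ hx0)))
          · exact Or.inr (Or.inr (Or.inr (h ▸ hx0)))
        obtain ⟨za, zb, zc, zd⟩ := zero_prop (hus a haj hat) (hus b hbj hbt) hucn hudn
          r1 r2 hsum4 hz
        refine hnzv m'' (fun s => ?_)
        by_cases e : s = j
        · rw [e]; exact hvj m''
        by_cases e2 : s = t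
        · rw [e2]; exact hvt m'' h''4
        by_cases e3 : s = a
        · rw [e3]; exact za
        by_cases e4 : s = b
        · rw [e4]; exact zb
        rcases hcov s e e2 e3 e4 with h | h
        · rw [h]; exact zc
        · rw [h]; exact zd
      -- handler : two singleton rows at c and d
      have hScSd : ∀ m' m'', m' ≠ m4 → m' ≠ m1 → m'' ≠ m4 → m'' ≠ m1 → m' ≠ m'' →
          w m' c ≠ 0 → w m'' d ≠ 0 → False := by
        intro m' m'' h'4 h'1 h''4 h''1 h'' hwc hwd
        have hx_c : v m' c = 0 := hvc m' hwc
        have hx_d : v m' d = 0 := by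
          have r := hrel m' h'1 h'4
          rw [hx_c, mul_zero] at r
          exact (mul_eq_zero.mp r.symm).resolve_left hucn
        have hz_d : v m'' d = 0 := hvd m'' hwd
        have hz_c : v m'' c = 0 := by
          have r := hrel m'' h''1 h''4
          rw [hz_d, mul_zero] at r
          exact (mul_eq_zero.mp r).resolve_left hudn
        -- both v m' and v m'' are supported on {a,b}
        have hsupx : ∀ s, s ≠ a → s ≠ b → v m' s = 0 := by
          intro s h1 h2
          by_cases e : s = j
          · rw [e]; exact hvj m'
          by_cases e2 : s = t
          · rw [e2]; exact hvt m' h'4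
          rcases hcov s e e2 h1 h2 with h | h
          · rw [h]; exact hx_c
          · rw [h]; exact hx_d
        have hsupz : ∀ s, s ≠ a → s ≠ b → v m'' s = 0 := by
          intro s h1 h2
          by_cases e : s = j
          · rw [e]; exact hvj m''
          by_cases e2 : s = t
          · rw [e2]; exact hvt m'' h''4
          rcases hcov s e e2 h1 h2 with h | h
          · rw [h]; exact hz_c
          · rw [h]; exact hz_d
        refine L_pair (p := conj' (u a)) (q := conj' (u b)) (x1 := v m' a) (x2 := v m' b)
          (y1 := v m'' a) (y2 := v m'' b)
          (fun h => (hus a haj hat) (conj_eq_zero h)) (fun h => (hus b hbj hbt) (conj_eq_zero h))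
          ?_ ?_ ?_ ?_ ?_
        · rw [← hvu m']
          refine (sum_two6 (fun s => conj' (u s) * v m' s) a b hab ?_).symm
          intro s h1 h2; simp [hsupx s h1 h2]
        · rw [← hvu m'']
          refine (sum_two6 (fun s => conj' (u s) * v m'' s) a b hab ?_).symm
          intro s h1 h2; simp [hsupz s h1 h2]
        · rw [← hov m' m'' h'']
          refine (sum_two6 (fun s => conj' (v m' s) * v m'' s) a b hab ?_).symm
          intro s h1 h2; simp [hsupx s h1 h2]
        · rw [← hnv m']
          refine (sum_two6 (fun s => conj' (v m' s) * v m' s) a b hab ?_).symm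
          intro s h1 h2; simp [hsupx s h1 h2]
        · rw [← hnv m'']
          refine (sum_two6 (fun s => conj' (v m'' s) * v m'' s) a b hab ?_).symm
          intro s h1 h2; simp [hsupz s h1 h2]
      -- dispatch over the classification of m2 and m3
      rcases hcls m2 hm24 hm21 with ⟨p1, p2⟩ | ⟨p1, p2⟩ | ⟨p1, p2, p3⟩ | ⟨p1, p2, p3⟩
      · rcases hcls m3 hm34 hm31 with ⟨q1, q2⟩ | ⟨q1, q2⟩ | ⟨q1, q2, q3⟩ | ⟨q1, q2, q3⟩
        · exact hSS m2 m3 c h23 p1 p2 q1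
        · exact hScSd m2 m3 hm24 hm21 hm34 hm31 h23 p1 q1
        · exact hTAB m3 hm34 hm31 q1 q2
        · exact hSS m2 m3 c h23 p1 p2 q1
      · rcases hcls m3 hm34 hm31 with ⟨q1, q2⟩ | ⟨q1, q2⟩ | ⟨q1, q2, q3⟩ | ⟨q1, q2, q3⟩
        · exact hScSd m3 m2 hm34 hm31 hm24 hm21 h23.symm q1 p1
        · exact hSS m2 m3 d h23 p1 p2 q1
        · exact hTAB m3 hm34 hm31 q1 q2
        · exact hSS m2 m3 d h23 p1 p2 q2
      · exact hTAB m2 hm24 hm21 p1 p2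
      · exact hCD m2 m3 hm24 hm21 hm34 hm31 h23 p1 p2
    -- driver for case A
    by_cases hms : mstar = m4
    · by_cases h2 : ∃ (m : Fin 4) (a b : Fin 6), m ≠ m4 ∧ a ≠ b ∧ w m a ≠ 0 ∧ w m b ≠ 0
      · obtain ⟨m1, a, b, hm1, hab, hwa, hwb⟩ := h2
        exact keyA1 m1 a b hm1 hab hwa hwb
      · push_neg at h2
        -- all rows other than m4 are singletons
        obtain ⟨p, q, r, hpq, hpr, hqr, hp4, hq4, hr4, _⟩ := fin4_others3 m4
        obtain ⟨sp, hsp⟩ := wex p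
        obtain ⟨sq, hsq⟩ := wex q
        obtain ⟨sr, hsr⟩ := wex r
        have hpsing : ∀ s, s ≠ sp → w p s = 0 := by
          intro s hs
          by_contra hws
          exact hsp (h2 p s sp hp4 hs hws)
        have hqsing : ∀ s, s ≠ sq → w q s = 0 := by
          intro s hs
          by_contra hws
          exact hsq (h2 q s sq hq4 hs hws)
        have hrsing : ∀ s, s ≠ sr → w r s = 0 := by
          intro s hs
          by_contra hws
          exact hsr (h2 r s sr hr4 hs hws)
        have hspq : sp ≠ sq := fun e => hsq (e ▸ hkill p q sp hpq hsp hpsing)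
        have hspr : sp ≠ sr := fun e => hsr (e ▸ hkill p r sp hpr hsp hpsing)
        have hsqr : sq ≠ sr := fun e => hsr (e ▸ hkill q r sq hqr hsq hqsing)
        have hm4sp : w m4 sp = 0 := hkill p m4 sp hp4 hsp hpsing
        have hm4sq : w m4 sq = 0 := hkill q m4 sq hq4 hsq hqsing
        have hm4sr : w m4 sr = 0 := hkill r m4 sr hr4 hsr hrsing
        have ha0 : w m4 a0 ≠ 0 := by rw [← hms]; exact hwa0
        have hb0 : w m4 b0 ≠ 0 := by rw [← hms]; exact hwb0
        have hspj : sp ≠ j := fun e => hsp (e ▸ hwj p)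
        have hspt : sp ≠ t := fun e => hsp (e ▸ hwt p)
        have hsqj : sq ≠ j := fun e => hsq (e ▸ hwj q)
        have hsqt : sq ≠ t := fun e => hsq (e ▸ hwt q)
        have hsrj : sr ≠ j := fun e => hsr (e ▸ hwj r)
        have hsrt : sr ≠ t := fun e => hsr (e ▸ hwt r)
        exact hab0 (eq_of_ne5 hjt hspj.symm hsqj.symm hsrj.symm hspt.symm hsqt.symm hsrt.symm
          hspq hspr hsqr
          (fun e => ha0 (e ▸ hwj m4)) (fun e => ha0 (e ▸ hwt m4))
          (fun e => ha0 (e ▸ hm4sp)) (fun e => ha0 (e ▸ hm4sq)) (fun e => ha0 (e ▸ hm4sr))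
          (fun e => hb0 (e ▸ hwj m4)) (fun e => hb0 (e ▸ hwt m4))
          (fun e => hb0 (e ▸ hm4sp)) (fun e => hb0 (e ▸ hm4sq)) (fun e => hb0 (e ▸ hm4sr)))
    · exact keyA1 mstar a0 b0 hms hab0 hwa0 hwb0
  · -- CASE B
    push_neg at hE
    have hnEp : ∀ m : Fin 4, ¬(∀ s, s ≠ t → v m s = 0) := by
      intro m hc
      obtain ⟨s, hs1, hs2⟩ := hE m
      exact hs2 (hc s hs1)
    have haj : a0 ≠ j := fun e => hwa0 (e ▸ hwj mstar)
    have hat : a0 ≠ t := fun e => hwa0 (e ▸ hwt mstar)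
    have hbj : b0 ≠ j := fun e => hwb0 (e ▸ hwj mstar)
    have hbt : b0 ≠ t := fun e => hwb0 (e ▸ hwt mstar)
    have hT2 : ∀ s, s ≠ a0 → s ≠ b0 → w mstar s = 0 := by
      intro s hsa hsb
      by_contra hws
      exact hnEp mstar (L_bigT hjt huj hut hus (hvj mstar) (hvu mstar) (hwj mstar) (hwt mstar)
        (hdis mstar) hab0 hsa.symm hsb.symm hwa0 hwb0 hws)
    obtain ⟨c, d, hcd, hcj, hct, hca, hcb, hdj, hdt, hda, hdb, hcov⟩ :=
      exists_pair_compl hjt haj.symm hbj.symm hat.symm hbt.symm hab0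
    have hucn : u c ≠ 0 := hus c hcj hct
    have hudn : u d ≠ 0 := hus d hdj hdt
    have huan : u a0 ≠ 0 := hus a0 haj hat
    have hubn : u b0 ≠ 0 := hus b0 hbj hbt
    have hva : ∀ m, w m a0 ≠ 0 → v m a0 = 0 := fun m h => (mul_eq_zero.mp (hdis m a0)).resolve_right h
    have hvb : ∀ m, w m b0 ≠ 0 → v m b0 = 0 := fun m h => (mul_eq_zero.mp (hdis m b0)).resolve_right h
    have hvc : ∀ m, w m c ≠ 0 → v m c = 0 := fun m h => (mul_eq_zero.mp (hdis m c)).resolve_right h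
    have hvd : ∀ m, w m d ≠ 0 → v m d = 0 := fun m h => (mul_eq_zero.mp (hdis m d)).resolve_right h
    -- parametrization of AB-type rows
    have hABparam : ∀ m : Fin 4, w m a0 ≠ 0 → w m b0 ≠ 0 →
        ∃ β : ℂ, v m c = conj' (u d) * β ∧ v m d = -(conj' (u c) * β) ∧
          conj' (v m t) * v m t + conj' β * β * (u c * conj' (u c) + u d * conj' (u d)) = 1 := by
      intro m hwma hwmb
      have hsum : conj' (u c) * v m c + conj' (u d) * v m d = 0 := by
        rw [← hvu m]
        refine (sum_two6 (fun s => conj' (u s) * v m s) c d hcd ?_).symm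
        intro s h1 h2
        by_cases e : s = j
        · simp [e, huj]
        by_cases e2 : s = t
        · simp [e2, hut]
        by_cases e3 : s = a0
        · simp [e3, hva m hwma]
        by_cases e4 : s = b0
        · simp [e4, hvb m hwmb]
        rcases hcov s e e2 e3 e4 with h | h
        · exact absurd h h1
        · exact absurd h h2
      obtain ⟨β, hc', hd'⟩ := L_param (fun h => hucn (conj_eq_zero h)) hsum
      refine ⟨β, hc', hd', ?_⟩
      have hn : conj' (v m t) * v m t + conj' (v m c) * v m c + conj' (v m d) * v m d = 1 := by
        rw [← hnv m]
        refine (sum_three6 (fun s => conj' (v m s) * v m s) t c d hct.symm hdt.symm hcd ?_).symm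
        intro s h1 h2 h3
        by_cases e : s = j
        · simp [e, hvj m]
        by_cases e3 : s = a0
        · simp [e3, hva m hwma]
        by_cases e4 : s = b0
        · simp [e4, hvb m hwmb]
        rcases hcov s e h1 e3 e4 with h | h
        · exact absurd h h2
        · exact absurd h h3
      rw [hc', hd'] at hn
      simp only [map_mul, map_neg, Complex.conj_conj] at hn
      linear_combination hn
    -- parametrization of CD-type rows
    have hCDparam : ∀ m : Fin 4, w m c ≠ 0 → w m d ≠ 0 →
        ∃ γ : ℂ, v m a0 = conj' (u b0) * γ ∧ v m b0 = -(conj' (u a0) * γ) ∧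
          conj' (v m t) * v m t + conj' γ * γ * (u a0 * conj' (u a0) + u b0 * conj' (u b0)) = 1 := by
      intro m hwmc hwmd
      have hsum : conj' (u a0) * v m a0 + conj' (u b0) * v m b0 = 0 := by
        rw [← hvu m]
        refine (sum_two6 (fun s => conj' (u s) * v m s) a0 b0 hab0 ?_).symm
        intro s h1 h2
        by_cases e : s = j
        · simp [e, huj]
        by_cases e2 : s = t
        · simp [e2, hut]
        rcases hcov s e e2 h1 h2 with h | h
        · simp [h, hvc m hwmc]
        · simp [h, hvd m hwmd]
      obtain ⟨γ, ha', hb'⟩ := L_param (fun h => huan (conj_eq_zero h)) hsum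
      refine ⟨γ, ha', hb', ?_⟩
      have hn : conj' (v m t) * v m t + conj' (v m a0) * v m a0 + conj' (v m b0) * v m b0 = 1 := by
        rw [← hnv m]
        refine (sum_three6 (fun s => conj' (v m s) * v m s) t a0 b0 hat.symm hbt.symm hab0 ?_).symm
        intro s h1 h2 h3
        by_cases e : s = j
        · simp [e, hvj m]
        rcases hcov s e h1 h2 h3 with h | h
        · simp [h, hvc m hwmc]
        · simp [h, hvd m hwmd]
      rw [ha', hb'] at hn
      simp only [map_mul, map_neg, Complex.conj_conj] at hn
      linear_combination hn
    -- orthogonality sums restricted to supports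
    have hoAB : ∀ m m', m ≠ m' → w m a0 ≠ 0 → w m b0 ≠ 0 →
        conj' (v m t) * v m' t + conj' (v m c) * v m' c + conj' (v m d) * v m' d = 0 := by
      intro m m' hmm hwma hwmb
      rw [← hov m m' hmm]
      refine (sum_three6 (fun s => conj' (v m s) * v m' s) t c d hct.symm hdt.symm hcd ?_).symm
      intro s h1 h2 h3
      by_cases e : s = j
      · simp [e, hvj m]
      by_cases e3 : s = a0
      · simp [e3, hva m hwma]
      by_cases e4 : s = b0
      · simp [e4, hvb m hwmb]
      rcases hcov s e h1 e3 e4 with h | h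
      · exact absurd h h2
      · exact absurd h h3
    have hoCD : ∀ m m', m ≠ m' → w m c ≠ 0 → w m d ≠ 0 →
        conj' (v m t) * v m' t + conj' (v m a0) * v m' a0 + conj' (v m b0) * v m' b0 = 0 := by
      intro m m' hmm hwmc hwmd
      rw [← hov m m' hmm]
      refine (sum_three6 (fun s => conj' (v m s) * v m' s) t a0 b0 hat.symm hbt.symm hab0 ?_).symm
      intro s h1 h2 h3
      by_cases e : s = j
      · simp [e, hvj m]
      rcases hcov s e h1 h2 h3 with h | h
      · simp [h, hvc m hwmc]
      · simp [h, hvd m hwmd]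
    have hoABCD : ∀ m m', m ≠ m' → w m a0 ≠ 0 → w m b0 ≠ 0 → w m' c ≠ 0 → w m' d ≠ 0 →
        conj' (v m t) * v m' t = 0 := by
      intro m m' hmm hwma hwmb hwmc hwmd
      rw [← hov m m' hmm]
      refine (sum_one6 (fun s => conj' (v m s) * v m' s) t ?_).symm
      intro s h1
      by_cases e : s = j
      · simp [e, hvj m]
      by_cases e3 : s = a0
      · simp [e3, hva m hwma]
      by_cases e4 : s = b0
      · simp [e4, hvb m hwmb]
      rcases hcov s e h1 e3 e4 with h | h
      · simp [h, hvc m' hwmc]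
      · simp [h, hvd m' hwmd]
    -- handler : three rows whose w is supported on {a0,b0}
    have h3AB : ∀ mx my, mx ≠ mstar → my ≠ mstar → mx ≠ my →
        w mx a0 ≠ 0 → w mx b0 ≠ 0 → (∀ s, s ≠ a0 → s ≠ b0 → w mx s = 0) →
        w my a0 ≠ 0 → w my b0 ≠ 0 → (∀ s, s ≠ a0 → s ≠ b0 → w my s = 0) → False := by
      intro mx my hx1 hy1 hxy t1 t2 t3 t1' t2' t3'
      refine L_three (x1 := w mstar a0) (x2 := w mstar b0) (y1 := w mx a0) (y2 := w mx b0)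
        (z1 := w my a0) (z2 := w my b0) ?_ ?_ ?_ ?_ ?_ ?_
      · rw [← how mstar mx (Ne.symm hx1)]
        refine (sum_two6 (fun s => conj' (w mstar s) * w mx s) a0 b0 hab0 ?_).symm
        intro s h1 h2; simp [hT2 s h1 h2]
      · rw [← how mstar my (Ne.symm hy1)]
        refine (sum_two6 (fun s => conj' (w mstar s) * w my s) a0 b0 hab0 ?_).symm
        intro s h1 h2; simp [hT2 s h1 h2]
      · rw [← how mx my hxy]
        refine (sum_two6 (fun s => conj' (w mx s) * w my s) a0 b0 hab0 ?_).symm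
        intro s h1 h2; simp [t3 s h1 h2]
      · rw [← hnw mstar]
        refine (sum_two6 (fun s => conj' (w mstar s) * w mstar s) a0 b0 hab0 ?_).symm
        intro s h1 h2; simp [hT2 s h1 h2]
      · rw [← hnw mx]
        refine (sum_two6 (fun s => conj' (w mx s) * w mx s) a0 b0 hab0 ?_).symm
        intro s h1 h2; simp [t3 s h1 h2]
      · rw [← hnw my]
        refine (sum_two6 (fun s => conj' (w my s) * w my s) a0 b0 hab0 ?_).symm
        intro s h1 h2; simp [t3' s h1 h2]
    -- handler : three rows whose w is supported on {c,d}
    have h3CD : ∀ mx my mz, mx ≠ my → mx ≠ mz → my ≠ mz →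
        (∀ s, s ≠ c → s ≠ d → w mx s = 0) → (∀ s, s ≠ c → s ≠ d → w my s = 0) →
        (∀ s, s ≠ c → s ≠ d → w mz s = 0) → False := by
      intro mx my mz hxy hxz hyz t3 t3' t3''
      refine L_three (x1 := w mx c) (x2 := w mx d) (y1 := w my c) (y2 := w my d)
        (z1 := w mz c) (z2 := w mz d) ?_ ?_ ?_ ?_ ?_ ?_
      · rw [← how mx my hxy]
        refine (sum_two6 (fun s => conj' (w mx s) * w my s) c d hcd ?_).symm
        intro s h1 h2; simp [t3 s h1 h2]
      · rw [← how mx mz hxz]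
        refine (sum_two6 (fun s => conj' (w mx s) * w mz s) c d hcd ?_).symm
        intro s h1 h2; simp [t3 s h1 h2]
      · rw [← how my mz hyz]
        refine (sum_two6 (fun s => conj' (w my s) * w mz s) c d hcd ?_).symm
        intro s h1 h2; simp [t3' s h1 h2]
      · rw [← hnw mx]
        refine (sum_two6 (fun s => conj' (w mx s) * w mx s) c d hcd ?_).symm
        intro s h1 h2; simp [t3 s h1 h2]
      · rw [← hnw my]
        refine (sum_two6 (fun s => conj' (w my s) * w my s) c d hcd ?_).symm
        intro s h1 h2; simp [t3' s h1 h2]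
      · rw [← hnw mz]
        refine (sum_two6 (fun s => conj' (w mz s) * w mz s) c d hcd ?_).symm
        intro s h1 h2; simp [t3'' s h1 h2]
    -- handler : one AB row plus two CD rows
    have hII : ∀ mx my mz, mx ≠ mstar → my ≠ mstar → mz ≠ mstar →
        mx ≠ my → mx ≠ mz → my ≠ mz →
        w mx a0 ≠ 0 → w mx b0 ≠ 0 → w my c ≠ 0 → w my d ≠ 0 → w mz c ≠ 0 → w mz d ≠ 0 → False := by
      intro mx my mz hx1 hy1 hz1 hxy hxz hyz t1 t2 u1 u2 u1' u2'
      obtain ⟨β1, e1c, e1d, n1⟩ := hABparam mstar hwa0 hwb0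
      obtain ⟨β2, e2c, e2d, n2⟩ := hABparam mx t1 t2
      obtain ⟨γ3, e3a, e3b, n3⟩ := hCDparam my u1 u2
      obtain ⟨γ4, e4a, e4b, n4⟩ := hCDparam mz u1' u2'
      have h12 : conj' (v mstar t) * v mx t + conj' β1 * β2 *
          (u c * conj' (u c) + u d * conj' (u d)) = 0 := by
        have e := hoAB mstar mx (Ne.symm hx1) hwa0 hwb0
        rw [e1c, e1d, e2c, e2d] at e
        simp only [map_mul, map_neg, Complex.conj_conj] at e
        linear_combination e
      have h34 : conj' (v my t) * v mz t + conj' γ3 * γ4 *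
          (u a0 * conj' (u a0) + u b0 * conj' (u b0)) = 0 := by
        have e := hoCD my mz hyz u1 u2
        rw [e3a, e3b, e4a, e4b] at e
        simp only [map_mul, map_neg, Complex.conj_conj] at e
        linear_combination e
      exact L_2p2 h12 h34 n1 n2 n3 n4
        (hoABCD mstar my (Ne.symm hy1) hwa0 hwb0 u1 u2)
        (hoABCD mstar mz (Ne.symm hz1) hwa0 hwb0 u1' u2')
        (hoABCD mx my hxy t1 t2 u1 u2)
        (hoABCD mx mz hxz t1 t2 u1' u2')
    -- handler : one AB row plus singleton rows at c and at d
    have hIII : ∀ mx my mz, mx ≠ mstar → my ≠ mstar → mz ≠ mstar →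
        mx ≠ my → mx ≠ mz → my ≠ mz →
        w mx a0 ≠ 0 → w mx b0 ≠ 0 →
        w my c ≠ 0 → w mz d ≠ 0 → False := by
      intro mx my mz hx1 hy1 hz1 hxy hxz hyz t1 t2 s1 s1'
      obtain ⟨β1, e1c, e1d, n1⟩ := hABparam mstar hwa0 hwb0
      obtain ⟨β2, e2c, e2d, n2⟩ := hABparam mx t1 t2
      have h12 : conj' (v mstar t) * v mx t + conj' β1 * β2 *
          (u c * conj' (u c) + u d * conj' (u d)) = 0 := by
        have e := hoAB mstar mx (Ne.symm hx1) hwa0 hwb0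
        rw [e1c, e1d, e2c, e2d] at e
        simp only [map_mul, map_neg, Complex.conj_conj] at e
        linear_combination e
      have hD := L_det h12 n1 n2
      -- the singleton row at c
      have hx_c : v my c = 0 := hvc my s1
      have key : ∀ m'', m'' ≠ mstar → m'' ≠ mx →
          conj' (v mstar t) * v m'' t + conj' β1 * (u d * v m'' c - u c * v m'' d) = 0 ∧
          conj' (v mx t) * v m'' t + conj' β2 * (u d * v m'' c - u c * v m'' d) = 0 := by
        intro m'' hm1 hm2
        constructor
        · have e := hoAB mstar m'' (Ne.symm hm1) hwa0 hwb0
          rw [e1c, e1d] at e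
          simp only [map_mul, map_neg, Complex.conj_conj] at e
          linear_combination e
        · have e := hoAB mx m'' (Ne.symm hm2) t1 t2
          rw [e2c, e2d] at e
          simp only [map_mul, map_neg, Complex.conj_conj] at e
          linear_combination e
      obtain ⟨ey1, ey2⟩ := key my hy1 (Ne.symm hxy)
      obtain ⟨hyt', hyy'⟩ := L_elim hD ey1 ey2
      have hx_d : v my d = 0 := by
        rw [hx_c, mul_zero, zero_sub, neg_eq_zero] at hyy'
        exact (mul_eq_zero.mp hyy').resolve_left hucn
      obtain ⟨ez1, ez2⟩ := key mz hz1 (Ne.symm hxz)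
      obtain ⟨hzt', hzz'⟩ := L_elim hD ez1 ez2
      have hz_d : v mz d = 0 := hvd mz s1'
      have hz_c : v mz c = 0 := by
        rw [hz_d, mul_zero, sub_zero] at hzz'
        exact (mul_eq_zero.mp hzz').resolve_left hudn
      have hsupx : ∀ s, s ≠ a0 → s ≠ b0 → v my s = 0 := by
        intro s h1 h2
        by_cases e : s = j
        · rw [e]; exact hvj my
        by_cases e2 : s = t
        · rw [e2]; exact hyt'
        rcases hcov s e e2 h1 h2 with h | h
        · rw [h]; exact hx_c
        · rw [h]; exact hx_d
      have hsupz : ∀ s, s ≠ a0 → s ≠ b0 → v mz s = 0 := by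
        intro s h1 h2
        by_cases e : s = j
        · rw [e]; exact hvj mz
        by_cases e2 : s = t
        · rw [e2]; exact hzt'
        rcases hcov s e e2 h1 h2 with h | h
        · rw [h]; exact hz_c
        · rw [h]; exact hz_d
      refine L_pair (p := conj' (u a0)) (q := conj' (u b0)) (x1 := v my a0) (x2 := v my b0)
        (y1 := v mz a0) (y2 := v mz b0)
        (fun h => huan (conj_eq_zero h)) (fun h => hubn (conj_eq_zero h)) ?_ ?_ ?_ ?_ ?_
      · rw [← hvu my]
        refine (sum_two6 (fun s => conj' (u s) * v my s) a0 b0 hab0 ?_).symm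
        intro s h1 h2; simp [hsupx s h1 h2]
      · rw [← hvu mz]
        refine (sum_two6 (fun s => conj' (u s) * v mz s) a0 b0 hab0 ?_).symm
        intro s h1 h2; simp [hsupz s h1 h2]
      · rw [← hov my mz hyz]
        refine (sum_two6 (fun s => conj' (v my s) * v mz s) a0 b0 hab0 ?_).symm
        intro s h1 h2; simp [hsupx s h1 h2]
      · rw [← hnv my]
        refine (sum_two6 (fun s => conj' (v my s) * v my s) a0 b0 hab0 ?_).symm
        intro s h1 h2; simp [hsupx s h1 h2]
      · rw [← hnv mz]
        refine (sum_two6 (fun s => conj' (v mz s) * v mz s) a0 b0 hab0 ?_).symm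
        intro s h1 h2; simp [hsupz s h1 h2]
    -- classification and dispatch
    obtain ⟨p, q, r, hpq, hpr, hqr, hp1, hq1, hr1, _⟩ := fin4_others3 mstar
    have hclsB : ∀ m, m ≠ mstar →
        (w m c ≠ 0 ∧ ∀ s, s ≠ c → w m s = 0) ∨ (w m d ≠ 0 ∧ ∀ s, s ≠ d → w m s = 0) ∨
        (w m a0 ≠ 0 ∧ w m b0 ≠ 0 ∧ ∀ s, s ≠ a0 → s ≠ b0 → w m s = 0) ∨
        (w m c ≠ 0 ∧ w m d ≠ 0 ∧ ∀ s, s ≠ c → s ≠ d → w m s = 0) := by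
      intro m hm
      exact L_classify hjt hab0 hcov hus huj hut hwa0 hwb0 hT2 (hvj m) (hvu m) (hdis m)
        (hwj m) (hwt m) (wex m) (how mstar m (Ne.symm hm)) (hnEp m)
    rcases hclsB p hp1 with ⟨p1, p2⟩ | ⟨p1, p2⟩ | ⟨p1, p2, p3⟩ | ⟨p1, p2, p3⟩
    · rcases hclsB q hq1 with ⟨q1, q2⟩ | ⟨q1, q2⟩ | ⟨q1, q2, q3⟩ | ⟨q1, q2, q3⟩
      · exact hSS p q c hpq p1 p2 q1
      · rcases hclsB r hr1 with ⟨r1, r2⟩ | ⟨r1, r2⟩ | ⟨r1, r2, r3⟩ | ⟨r1, r2, r3⟩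
        · exact hSS p r c hpr p1 p2 r1
        · exact hSS q r d hqr q1 q2 r1
        · exact hIII r p q hr1 hp1 hq1 hpr.symm hqr.symm hpq r1 r2 p1 q1
        · exact hSS p r c hpr p1 p2 r1
      · rcases hclsB r hr1 with ⟨r1, r2⟩ | ⟨r1, r2⟩ | ⟨r1, r2, r3⟩ | ⟨r1, r2, r3⟩
        · exact hSS p r c hpr p1 p2 r1
        · exact hIII q p r hq1 hp1 hr1 hpq.symm hqr hpr q1 q2 p1 r1
        · exact h3AB q r hq1 hr1 hqr q1 q2 q3 r1 r2 r3
        · exact hSS p r c hpr p1 p2 r1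
      · exact hSS p q c hpq p1 p2 q1
    · rcases hclsB q hq1 with ⟨q1, q2⟩ | ⟨q1, q2⟩ | ⟨q1, q2, q3⟩ | ⟨q1, q2, q3⟩
      · rcases hclsB r hr1 with ⟨r1, r2⟩ | ⟨r1, r2⟩ | ⟨r1, r2, r3⟩ | ⟨r1, r2, r3⟩
        · exact hSS q r c hqr q1 q2 r1
        · exact hSS p r d hpr p1 p2 r1
        · exact hIII r q p hr1 hq1 hp1 hqr.symm hpr.symm hpq.symm r1 r2 q1 p1
        · exact hSS q r c hqr q1 q2 r1
      · exact hSS p q d hpq p1 p2 q1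
      · rcases hclsB r hr1 with ⟨r1, r2⟩ | ⟨r1, r2⟩ | ⟨r1, r2, r3⟩ | ⟨r1, r2, r3⟩
        · exact hIII q r p hq1 hr1 hp1 hqr hpq.symm hpr.symm q1 q2 r1 p1
        · exact hSS p r d hpr p1 p2 r1
        · exact h3AB q r hq1 hr1 hqr q1 q2 q3 r1 r2 r3
        · exact hSS p r d hpr p1 p2 r2
      · exact hSS p q d hpq p1 p2 q2
    · rcases hclsB q hq1 with ⟨q1, q2⟩ | ⟨q1, q2⟩ | ⟨q1, q2, q3⟩ | ⟨q1, q2, q3⟩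
      · rcases hclsB r hr1 with ⟨r1, r2⟩ | ⟨r1, r2⟩ | ⟨r1, r2, r3⟩ | ⟨r1, r2, r3⟩
        · exact hSS q r c hqr q1 q2 r1
        · exact hIII p q r hp1 hq1 hr1 hpq hpr hqr p1 p2 q1 r1
        · exact h3AB p r hp1 hr1 hpr p1 p2 p3 r1 r2 r3
        · exact hSS q r c hqr q1 q2 r1
      · rcases hclsB r hr1 with ⟨r1, r2⟩ | ⟨r1, r2⟩ | ⟨r1, r2, r3⟩ | ⟨r1, r2, r3⟩
        · exact hIII p r q hp1 hr1 hq1 hpr hpq hqr.symm p1 p2 r1 q1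
        · exact hSS q r d hqr q1 q2 r1
        · exact h3AB p r hp1 hr1 hpr p1 p2 p3 r1 r2 r3
        · exact hSS q r d hqr q1 q2 r2
      · exact h3AB p q hp1 hq1 hpq p1 p2 p3 q1 q2 q3
      · rcases hclsB r hr1 with ⟨r1, r2⟩ | ⟨r1, r2⟩ | ⟨r1, r2, r3⟩ | ⟨r1, r2, r3⟩
        · exact hSS r q c hqr.symm r1 r2 q1
        · exact hSS r q d hqr.symm r1 r2 q2
        · exact h3AB p r hp1 hr1 hpr p1 p2 p3 r1 r2 r3
        · exact hII p q r hp1 hq1 hr1 hpq hpr hqr p1 p2 q1 q2 r1 r2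
    · rcases hclsB q hq1 with ⟨q1, q2⟩ | ⟨q1, q2⟩ | ⟨q1, q2, q3⟩ | ⟨q1, q2, q3⟩
      · exact hSS q p c hpq.symm q1 q2 p1
      · exact hSS q p d hpq.symm q1 q2 p2
      · rcases hclsB r hr1 with ⟨r1, r2⟩ | ⟨r1, r2⟩ | ⟨r1, r2, r3⟩ | ⟨r1, r2, r3⟩
        · exact hSS r p c hpr.symm r1 r2 p1
        · exact hSS r p d hpr.symm r1 r2 p2
        · exact h3AB q r hq1 hr1 hqr q1 q2 q3 r1 r2 r3
        · exact hII q p r hq1 hp1 hr1 hpq.symm hqr hpr q1 q2 p1 p2 r1 r2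
      · rcases hclsB r hr1 with ⟨r1, r2⟩ | ⟨r1, r2⟩ | ⟨r1, r2, r3⟩ | ⟨r1, r2, r3⟩
        · exact hSS r p c hpr.symm r1 r2 p1
        · exact hSS r p d hpr.symm r1 r2 p2
        · exact hII r p q hr1 hp1 hq1 hpr.symm hqr.symm hpq r1 r2 p1 p2 q1 q2
        · exact h3CD p q r hpq hpr hqr p3 q3 r3


private lemma weight_eq_one {n : ℕ} {x : EuclideanSpace ℂ (Fin n)} {s0 : Fin n}
    (h1 : x s0 ≠ 0) (h2 : ∀ s, s ≠ s0 → x s = 0) : weight x = 1 := by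
  unfold weight
  rw [Finset.card_eq_one]
  refine ⟨s0, ?_⟩
  ext s
  simp only [Finset.mem_filter, Finset.mem_univ, true_and, Finset.mem_singleton]
  constructor
  · intro hs
    by_contra hne
    exact hs (h2 s hne)
  · rintro rfl
    exact h1

/-- If one of two orthogonal quantum Latin squares of order 6 in standard form has an
entry of weight four, then the other square has only weight-one entries in that column. -/
theorem column_of_weight_four (Ψ Φ : Fin 6 → Fin 6 → EuclideanSpace ℂ (Fin 6))
    (hΨ : IsQLS Ψ) (hΦ : IsQLS Φ) (hO : OrthQLS Ψ Φ)
    (hsΨ : StdForm Ψ) (hsΦ : StdForm Φ)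
    (i j : Fin 6) (h : weight (Ψ i j) = 4) :
    ∀ k, weight (Φ k j) = 1 := by
  have oiΨ := orthonormal_iff_ite.mp (hΨ.2 j)
  have oiΦ := orthonormal_iff_ite.mp (hΦ.2 j)
  have oΨ : ∀ k l : Fin 6, k ≠ l → ∑ s, conj' (Ψ k j s) * Ψ l j s = 0 := by
    intro k l hkl
    have := oiΨ k l
    rw [if_neg hkl] at this
    simpa only [PiLp.inner_apply, RCLike.inner_apply, mul_comm] using this
  have nΨ : ∀ k : Fin 6, ∑ s, conj' (Ψ k j s) * Ψ k j s = 1 := by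
    intro k
    have := oiΨ k k
    rw [if_pos rfl] at this
    simpa only [PiLp.inner_apply, RCLike.inner_apply, mul_comm] using this
  have oΦ : ∀ k l : Fin 6, k ≠ l → ∑ s, conj' (Φ k j s) * Φ l j s = 0 := by
    intro k l hkl
    have := oiΦ k l
    rw [if_neg hkl] at this
    simpa only [PiLp.inner_apply, RCLike.inner_apply, mul_comm] using this
  have nΦ : ∀ k : Fin 6, ∑ s, conj' (Φ k j s) * Φ k j s = 1 := by
    intro k
    have := oiΦ k k
    rw [if_pos rfl] at this
    simpa only [PiLp.inner_apply, RCLike.inner_apply, mul_comm] using this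
  have hdisj : ∀ k : Fin 6, k ≠ 0 → ∀ s, Ψ k j s * Φ k j s = 0 := by
    intro k hk s
    have h0 := hO 0 s k j (by
      simp only [ne_eq, Prod.mk.injEq, not_and]
      intro e
      exact absurd e.symm hk)
    rw [hsΨ s, hsΦ s, EuclideanSpace.inner_single_left, EuclideanSpace.inner_single_left] at h0
    simpa using h0
  have vj : ∀ k : Fin 6, k ≠ 0 → Ψ k j j = 0 := by
    intro k hk
    have e := oΨ 0 k (Ne.symm hk)
    rw [hsΨ j] at e
    have e2 : ∑ s, conj' ((EuclideanSpace.single j (1 : ℂ)) s) * Ψ k j s =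
        conj' ((EuclideanSpace.single j (1 : ℂ)) j) * Ψ k j j :=
      sum_one6 (fun s => conj' ((EuclideanSpace.single j (1 : ℂ)) s) * Ψ k j s) j
        (fun s hs => by simp [EuclideanSpace.single_apply, hs])
    rw [e] at e2
    simpa [EuclideanSpace.single_apply] using e2.symm
  have wj : ∀ k : Fin 6, k ≠ 0 → Φ k j j = 0 := by
    intro k hk
    have e := oΦ 0 k (Ne.symm hk)
    rw [hsΦ j] at e
    have e2 : ∑ s, conj' ((EuclideanSpace.single j (1 : ℂ)) s) * Φ k j s =
        conj' ((EuclideanSpace.single j (1 : ℂ)) j) * Φ k j j :=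
      sum_one6 (fun s => conj' ((EuclideanSpace.single j (1 : ℂ)) s) * Φ k j s) j
        (fun s hs => by simp [EuclideanSpace.single_apply, hs])
    rw [e] at e2
    simpa [EuclideanSpace.single_apply] using e2.symm
  have hi0 : i ≠ 0 := by
    intro e
    rw [e, hsΨ j] at h
    have h1 : weight (EuclideanSpace.single j (1 : ℂ)) = 1 :=
      weight_eq_one (s0 := j) (by simp [EuclideanSpace.single_apply])
        (fun s hs => by simp [EuclideanSpace.single_apply, hs])
    rw [h1] at h
    exact absurd h (by norm_num)
  have hvij : Ψ i j j = 0 := vj i hi0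
  -- extraction of the coordinate t
  have hT4 : (Finset.univ.filter fun s => Ψ i j s ≠ 0).card = 4 := h
  have hjT : j ∉ (Finset.univ.filter fun s => Ψ i j s ≠ 0) := by
    simp [hvij]
  have hc5 : (insert j (Finset.univ.filter fun s => Ψ i j s ≠ 0)).card = 5 := by
    rw [Finset.card_insert_of_notMem hjT, hT4]
  have hc1 : ((insert j (Finset.univ.filter fun s => Ψ i j s ≠ 0))ᶜ).card = 1 := by
    rw [Finset.card_compl, hc5]
    rfl
  obtain ⟨t, ht⟩ := Finset.card_eq_one.mp hc1
  have htmem : t ∉ insert j (Finset.univ.filter fun s => Ψ i j s ≠ 0) := by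
    rw [← Finset.mem_compl, ht]
    simp
  have htj : t ≠ j := fun e => htmem (by simp [e])
  have hut : Ψ i j t = 0 := by
    by_contra hne
    exact htmem (by simp [hne])
  have hus : ∀ s, s ≠ j → s ≠ t → Ψ i j s ≠ 0 := by
    intro s hsj hst hz
    have : s ∈ ((insert j (Finset.univ.filter fun s => Ψ i j s ≠ 0))ᶜ) := by
      simp [hsj, hz]
    rw [ht] at this
    exact hst (by simpa using this)
  -- the weight-one entry of Φ in row i
  have hwi_supp : ∀ s, s ≠ t → Φ i j s = 0 := by
    intro s hst
    by_cases hsj : s = j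
    · rw [hsj]; exact wj i hi0
    · exact (mul_eq_zero.mp (hdisj i hi0 s)).resolve_left (hus s hsj hst)
  have hwit : Φ i j t ≠ 0 := by
    intro h0
    have e2 : ∑ s, conj' (Φ i j s) * Φ i j s = conj' (Φ i j t) * Φ i j t :=
      sum_one6 (fun s => conj' (Φ i j s) * Φ i j s) t (fun s hs => by simp [hwi_supp s hs])
    rw [nΦ i, h0] at e2
    simp at e2
  have hwtz : ∀ k : Fin 6, k ≠ 0 → k ≠ i → Φ k j t = 0 := by
    intro k hk0 hki
    have e2 : ∑ s, conj' (Φ i j s) * Φ k j s = conj' (Φ i j t) * Φ k j t :=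
      sum_one6 (fun s => conj' (Φ i j s) * Φ k j s) t (fun s hs => by simp [hwi_supp s hs])
    rw [oΦ i k (Ne.symm hki)] at e2
    rcases mul_eq_zero.mp e2.symm with h' | h'
    · exact absurd (conj_eq_zero h') hwit
    · exact h'
  -- main goal
  intro k
  by_cases hk0 : k = 0
  · rw [hk0, hsΦ j]
    exact weight_eq_one (s0 := j) (by simp [EuclideanSpace.single_apply])
      (fun s hs => by simp [EuclideanSpace.single_apply, hs])
  by_cases hki : k = i
  · rw [hki]
    exact weight_eq_one hwit hwi_supp
  by_contra hOne
  -- the row k has at least two nonzero coordinates in Φ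
  have hnonempty : (Finset.univ.filter fun s => Φ k j s ≠ 0).Nonempty := by
    rw [Finset.filter_nonempty_iff]
    by_contra hc
    push_neg at hc
    have h0 := nΦ k
    rw [Finset.sum_eq_zero (fun s hs => by rw [hc s hs]; ring)] at h0
    exact zero_ne_one h0
  have h2le : 1 < (Finset.univ.filter fun s => Φ k j s ≠ 0).card :=
    lt_of_le_of_ne (Finset.card_pos.mpr hnonempty) (Ne.symm hOne)
  obtain ⟨a0, ha0, b0, hb0, hab0⟩ := Finset.one_lt_card.mp h2le
  rw [Finset.mem_filter] at ha0 hb0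
  -- the other three rows
  have hik : i ≠ k := Ne.symm hki
  have hcard3 : (({0, i, k} : Finset (Fin 6))ᶜ).card = 3 := by
    rw [Finset.card_compl, Finset.card_insert_of_notMem (by simp [Ne.symm hi0, Ne.symm hk0]),
      Finset.card_insert_of_notMem (by simp [hik]), Finset.card_singleton]
    rfl
  obtain ⟨k2, k3, k4, h23, h24, h34, hset⟩ := Finset.card_eq_three.mp hcard3
  have hk2 : k2 ∉ ({0, i, k} : Finset (Fin 6)) := by rw [← Finset.mem_compl, hset]; simp
  have hk3 : k3 ∉ ({0, i, k} : Finset (Fin 6)) := by rw [← Finset.mem_compl, hset]; simp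
  have hk4 : k4 ∉ ({0, i, k} : Finset (Fin 6)) := by rw [← Finset.mem_compl, hset]; simp
  simp only [Finset.mem_insert, Finset.mem_singleton, not_or] at hk2 hk3 hk4
  set r : Fin 4 → Fin 6 := ![k, k2, k3, k4] with hr
  have hr0 : ∀ m, r m ≠ 0 := by
    intro m
    fin_cases m
    · exact hk0
    · exact hk2.1
    · exact hk3.1
    · exact hk4.1
  have hri : ∀ m, r m ≠ i := by
    intro m
    fin_cases m
    · exact hki
    · exact hk2.2.1
    · exact hk3.2.1
    · exact hk4.2.1
  have h01 : k ≠ k2 := fun e => hk2.2.2 e.symm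
  have h02 : k ≠ k3 := fun e => hk3.2.2 e.symm
  have h03 : k ≠ k4 := fun e => hk4.2.2 e.symm
  have hrinj : ∀ m l : Fin 4, m ≠ l → r m ≠ r l := by
    intro m l hml
    fin_cases m <;> fin_cases l <;>
      first
        | exact absurd rfl hml
        | exact h01
        | exact h02
        | exact h03
        | exact h23
        | exact h24
        | exact h34
        | exact h01.symm
        | exact h02.symm
        | exact h03.symm
        | exact h23.symm
        | exact h24.symm
        | exact h34.symm
  exact core_s8 (fun s => Ψ i j s) (fun m s => Ψ (r m) j s) (fun m s => Φ (r m) j s) j t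
    htj.symm hvij hut hus
    (fun m l hml => oΨ (r m) (r l) (hrinj m l hml))
    (fun m => nΨ (r m))
    (fun m l hml => oΦ (r m) (r l) (hrinj m l hml))
    (fun m => nΦ (r m))
    (fun m => oΨ i (r m) (Ne.symm (hri m)))
    (fun m => vj (r m) (hr0 m))
    (fun m => wj (r m) (hr0 m))
    (fun m => hwtz (r m) (hr0 m) (hri m))
    (fun m s => hdisj (r m) (hr0 m) s)
    0 a0 b0 hab0 ha0.2 hb0.2
end
end
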